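/- arXiv:2403.13449 — 3 statements merged into one kernel-verified Lean document; each statement's English description precedes it below -/
import Mathlib

section
/- For every bi-infinite word x over a finite alphabet and every integer n ≥ 1, the factor complexity satisfies p_x(n) ≤ n + span(x) (the inequality being trivial when span(x) = ∞). -/
open scoped ENat Classical

/-- The length-`n` factor of the bi-infinite word `x` starting at position `i`. -/
def subwordZ {A : Type*} (x : ℤ → A) (i : ℤ) (n : ℕ) : List A :=
  (List.range n).map fun j => x (i + (j : ℤ))

/-- `w` occurs in `x` at position `i`. -/
def occursAt {A : Type*} (x : ℤ → A) (w : List A) (i : ℤ) : Prop :=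
  subwordZ x i w.length = w

/-- `w` is a factor of the bi-infinite word `x`. -/
def IsFactorZ {A : Type*} (x : ℤ → A) (w : List A) : Prop :=
  ∃ i : ℤ, occursAt x w i

/-- `Γ` is a string attractor of the bi-infinite word `x`: every nonempty factor
has an occurrence crossing a position of `Γ`. -/
def IsAttractorZ {A : Type*} (x : ℤ → A) (Γ : Set ℤ) : Prop :=
  ∀ w : List A, w ≠ [] → IsFactorZ x w →
    ∃ i : ℤ, occursAt x w i ∧ ∃ p ∈ Γ, i ≤ p ∧ p < i + (w.length : ℤ)

/-- The span `sup Γ - inf Γ` of a set of integers (`⊤` when unbounded). -/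
noncomputable def setSpan (Γ : Set ℤ) : ℕ∞ :=
  ⨆ a ∈ Γ, ⨆ b ∈ Γ, ((b - a).toNat : ℕ∞)

/-- The string attractor span of a bi-infinite word. -/
noncomputable def wordSpan {A : Type*} (x : ℤ → A) : ℕ∞ :=
  ⨅ Γ ∈ {Γ : Set ℤ | IsAttractorZ x Γ}, setSpan Γ

/-- The factor complexity of a bi-infinite word. -/
noncomputable def complexityZ {A : Type*} (x : ℤ → A) (n : ℕ) : ℕ :=
  Nat.card {w : List A // w.length = n ∧ IsFactorZ x w}

/-- The shift `S^k`. -/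
def shiftZ {A : Type*} (k : ℤ) (x : ℤ → A) : ℤ → A := fun i => x (i + k)

def PositivelyPeriodicZ {A : Type*} (x : ℤ → A) : Prop :=
  ∃ (N : ℤ) (p : ℕ), 1 ≤ p ∧ ∀ n : ℤ, N ≤ n → x n = x (n + (p : ℤ))

def NegativelyPeriodicZ {A : Type*} (x : ℤ → A) : Prop :=
  ∃ (N : ℤ) (p : ℕ), 1 ≤ p ∧ ∀ n : ℤ, n ≤ N → x n = x (n - (p : ℤ))

def EventuallyPeriodicZ {A : Type*} (x : ℤ → A) : Prop :=
  PositivelyPeriodicZ x ∨ NegativelyPeriodicZ x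

def AperiodicZ {A : Type*} (x : ℤ → A) : Prop := ¬ EventuallyPeriodicZ x

def PurelyPeriodicZ {A : Type*} (x : ℤ → A) : Prop :=
  ∃ p : ℕ, 1 ≤ p ∧ ∀ n : ℤ, x n = x (n + (p : ℤ))

def LeftSpecialZ {A : Type*} (x : ℤ → A) (u : List A) : Prop :=
  ∃ a b : A, a ≠ b ∧ IsFactorZ x (a :: u) ∧ IsFactorZ x (b :: u)

def RightSpecialZ {A : Type*} (x : ℤ → A) (u : List A) : Prop :=
  ∃ a b : A, a ≠ b ∧ IsFactorZ x (u ++ [a]) ∧ IsFactorZ x (u ++ [b])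

def BispecialZ {A : Type*} (x : ℤ → A) (u : List A) : Prop :=
  LeftSpecialZ x u ∧ RightSpecialZ x u

/-- A bi-infinite word over `{0,1}` is Sturmian if it is aperiodic with complexity `n + 1`. -/
def SturmianZ (x : ℤ → Fin 2) : Prop :=
  AperiodicZ x ∧ ∀ n : ℕ, complexityZ x n = n + 1

/-- `x_{[-n, n+1]} = r_n(x) 01 l_n(x)` for all `n`. -/
def UpperCharacteristic (x : ℤ → Fin 2) : Prop :=
  SturmianZ x ∧ ∀ n : ℕ, ∃ r l : List (Fin 2),
    r.length = n ∧ RightSpecialZ x r ∧ l.length = n ∧ LeftSpecialZ x l ∧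
    subwordZ x (-(n : ℤ)) (2 * n + 2) = r ++ [0, 1] ++ l

/-- `x_{[-n, n+1]} = r_n(x) 10 l_n(x)` for all `n`. -/
def LowerCharacteristic (x : ℤ → Fin 2) : Prop :=
  SturmianZ x ∧ ∀ n : ℕ, ∃ r l : List (Fin 2),
    r.length = n ∧ RightSpecialZ x r ∧ l.length = n ∧ LeftSpecialZ x l ∧
    subwordZ x (-(n : ℤ)) (2 * n + 2) = r ++ [1, 0] ++ l

def CharacteristicSturmian (x : ℤ → Fin 2) : Prop :=
  UpperCharacteristic x ∨ LowerCharacteristic x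

def QuasiSturmianZ {A : Type*} (x : ℤ → A) : Prop :=
  AperiodicZ x ∧ ∃ (n₀ k : ℕ), 1 ≤ k ∧ ∀ n : ℕ, n₀ ≤ n → complexityZ x n = n + k

/-- Starting position in `φ(x)` of the image `φ(x_i)` (image of `x_0` starts at `0`). -/
def blockStart {A B : Type*} (φ : A → List B) (x : ℤ → A) (i : ℤ) : ℤ :=
  if 0 ≤ i then ((List.range i.toNat).map fun j => ((φ (x (j : ℤ))).length : ℤ)).sum
  else -((List.range (-i).toNat).map fun j => ((φ (x (-(j : ℤ) - 1))).length : ℤ)).sum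

/-- `y` is the image of the bi-infinite word `x` under the substitution `φ`
(with images of letters nonempty). -/
def IsSubstImage {A B : Type*} (φ : A → List B) (x : ℤ → A) (y : ℤ → B) : Prop :=
  (∀ a : A, φ a ≠ []) ∧
  ∀ i : ℤ, subwordZ y (blockStart φ x i) (φ (x i)).length = φ (x i)

/-- `φ_x(Γ)`: positions of `φ(x)` occupied by images of letters at positions in `Γ`. -/
def substSupp {A B : Type*} (φ : A → List B) (x : ℤ → A) (Γ : Set ℤ) : Set ℤ :=
  {n : ℤ | ∃ i ∈ Γ, blockStart φ x i ≤ n ∧ n < blockStart φ x i + ((φ (x i)).length : ℤ)}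

/-- `φ_x^{-1}(Γ)`: positions of letters of `x` whose image blocks in `φ(x)` meet `Γ`. -/
def substPreimage {A B : Type*} (φ : A → List B) (x : ℤ → A) (Γ : Set ℤ) : Set ℤ :=
  {i : ℤ | ∃ n ∈ Γ, blockStart φ x i ≤ n ∧ n < blockStart φ x i + ((φ (x i)).length : ℤ)}

/-- The set of occurrences of `w` in the finite word `u`. -/
def occSetF {B : Type*} (u w : List B) : Set ℕ :=
  {i : ℕ | i + w.length ≤ u.length ∧ (u.drop i).take w.length = w}

/-- `φ` is a return morphism for `w`. -/
def IsReturnMorphism {A B : Type*} (φ : A → List B) (w : List B) : Prop :=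
  w ≠ [] ∧ Function.Injective φ ∧ (∀ a : A, φ a ≠ []) ∧
  ∀ a : A, occSetF (w ++ φ a) w = {0, (φ a).length}

def listPow {A : Type*} (u : List A) : ℕ → List A
  | 0 => []
  | n + 1 => u ++ listPow u n

/-- A substitution on `{0,1}` is acyclic if `φ(0)` and `φ(1)` are not powers of one word. -/
def AcyclicSubst {A : Type*} (φ : Fin 2 → List A) : Prop :=
  ¬ ∃ (u : List A) (m n : ℕ), φ 0 = listPow u m ∧ φ 1 = listPow u n

/-- The substitution `L₀ : 0 ↦ 0, 1 ↦ 01`. -/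
def Lzero : Fin 2 → List (Fin 2) := fun a => if a = 0 then [0] else [0, 1]

/-- The substitution `L₁ : 0 ↦ 10, 1 ↦ 1`. -/
def Lone : Fin 2 → List (Fin 2) := fun a => if a = 0 then [1, 0] else [1]

/-- A finite word has period `r`. -/
def PeriodicF {A : Type*} (w : List A) (r : ℕ) : Prop :=
  ∀ i : ℕ, i + r < w.length → w[i]? = w[i + r]?

/-- `Γ` is a string attractor of the finite word `w`. -/
def IsAttractorF {A : Type*} (w : List A) (Γ : Set ℕ) : Prop :=
  ∀ u : List A, u ≠ [] → u <:+: w →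
    ∃ i : ℕ, i + u.length ≤ w.length ∧ (w.drop i).take u.length = u ∧
      ∃ p ∈ Γ, i ≤ p ∧ p < i + u.length

def RecurrentZ {A : Type*} (x : ℤ → A) : Prop :=
  ∀ w : List A, IsFactorZ x w → {i : ℤ | occursAt x w i}.Infinite

def UniformlyRecurrentZ {A : Type*} (x : ℤ → A) : Prop :=
  ∀ w : List A, IsFactorZ x w →
    ∃ n : ℕ, ∀ i : ℤ, ∃ j : ℤ, i ≤ j ∧ j + (w.length : ℤ) ≤ i + (n : ℤ) ∧ occursAt x w j

def ModuloRecurrentZ {A : Type*} (x : ℤ → A) : Prop :=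
  ∀ w : List A, IsFactorZ x w → ∀ k : ℕ, 1 ≤ k → ∀ r : ℤ,
    ∃ i : ℤ, occursAt x w i ∧ (k : ℤ) ∣ (i - r)

/-- A shift space: closed (product topology, `A` discrete) and shift-invariant. -/
def IsShiftSpace {A : Type*} (X : Set (ℤ → A)) : Prop :=
  @IsClosed _ (@Pi.topologicalSpace ℤ (fun _ => A) (fun _ => ⊥)) X ∧ shiftZ 1 '' X = X

def IsAttractorX {A : Type*} (X : Set (ℤ → A)) (Γ : Set ℤ) : Prop :=
  ∀ x ∈ X, IsAttractorZ x Γ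

def MinimalShift {A : Type*} (X : Set (ℤ → A)) : Prop :=
  IsShiftSpace X ∧ ∀ Y ⊆ X, IsShiftSpace Y → Y = ∅ ∨ Y = X

/-- The orbit closure of a bi-infinite word (product topology, `A` discrete). -/
def orbitClosureZ {A : Type*} (x : ℤ → A) : Set (ℤ → A) :=
  @closure _ (@Pi.topologicalSpace ℤ (fun _ => A) (fun _ => ⊥)) {y | ∃ k : ℤ, y = shiftZ k x}

lemma aux_complexity_le {A : Type*} [Fintype A] (x : ℤ → A) (n s : ℕ) (hn : 1 ≤ n)
    (Γ : Set ℤ) (hΓ : IsAttractorZ x Γ) (hs : setSpan Γ ≤ (s : ℕ∞)) :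
    complexityZ x n ≤ n + s := by
  -- Γ is nonempty
  have hfac : IsFactorZ x (subwordZ x 0 1) := ⟨0, rfl⟩
  have hne : subwordZ x 0 1 ≠ [] := by simp [subwordZ]
  obtain ⟨i0, _, p0, hp0, _⟩ := hΓ _ hne hfac
  -- elements of Γ are within distance s of each other
  have key : ∀ p ∈ Γ, ∀ q ∈ Γ, q ≤ p + (s : ℤ) := by
    intro p hp q hq
    have h1 : ((q - p).toNat : ℕ∞) ≤ setSpan Γ := by
      unfold setSpan
      exact le_iSup₂_of_le p hp (le_iSup₂_of_le q hq le_rfl)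
    have h2 : (q - p).toNat ≤ s := Nat.cast_le.mp (le_trans h1 hs)
    omega
  -- least element of Γ
  obtain ⟨m, hmΓ, hmin⟩ := Int.exists_least_of_bdd (P := fun z => z ∈ Γ)
    ⟨p0 - (s : ℤ), fun z hz => by have := key z hz p0 hp0; omega⟩ ⟨p0, hp0⟩
  -- every length-n factor occurs in the window
  have hocc : ∀ w : List A, w.length = n ∧ IsFactorZ x w →
      ∃ i : ℤ, subwordZ x i n = w ∧ m - (n : ℤ) + 1 ≤ i ∧ i ≤ m + (s : ℤ) := by
    rintro w ⟨hw, hfw⟩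
    have hwne : w ≠ [] := by
      intro h; rw [h] at hw; simp at hw; omega
    obtain ⟨i, hoi, p, hpΓ, hip, hpi⟩ := hΓ w hwne hfw
    rw [hw] at hpi
    refine ⟨i, by rw [← hw]; exact hoi, ?_, ?_⟩
    · have := hmin p hpΓ; omega
    · have := key m hmΓ p hpΓ; omega
  choose g hg using hocc
  have hcard : complexityZ x n ≤ Nat.card (Finset.Icc (m - (n : ℤ) + 1) (m + (s : ℤ))) := by
    refine Nat.card_le_card_of_injective
      (fun w => (⟨g w.1 w.2, Finset.mem_Icc.mpr ⟨(hg w.1 w.2).2.1, (hg w.1 w.2).2.2⟩⟩ :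
        (Finset.Icc (m - (n : ℤ) + 1) (m + (s : ℤ))))) ?_
    intro w1 w2 h
    have hv : g w1.1 w1.2 = g w2.1 w2.2 := congrArg Subtype.val h
    apply Subtype.ext
    rw [← (hg w1.1 w1.2).1, ← (hg w2.1 w2.2).1, hv]
  have hIcc : Nat.card (Finset.Icc (m - (n : ℤ) + 1) (m + (s : ℤ))) = n + s := by
    rw [Nat.card_eq_finsetCard, Int.card_Icc]
    omega
  rw [hIcc] at hcard
  exact hcard

/-- For every bi-infinite word over a finite alphabet and every `n ≥ 1`,
the factor complexity satisfies `p_x(n) ≤ n + span(x)`. -/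
theorem factor_complexity_le_span {A : Type*} [Fintype A] (x : ℤ → A) (n : ℕ) (hn : 1 ≤ n) :
    (complexityZ x n : ℕ∞) ≤ (n : ℕ∞) + wordSpan x := by
  rcases eq_or_ne (wordSpan x) ⊤ with h | h
  · simp [h]
  · obtain ⟨s, hs⟩ := WithTop.ne_top_iff_exists.mp h
    have hlt : wordSpan x < ((s + 1 : ℕ) : ℕ∞) := by
      rw [← hs]; exact ENat.coe_lt_coe.mpr (Nat.lt_succ_self s)
    rw [wordSpan] at hlt
    obtain ⟨Γ, hΓlt⟩ := iInf_lt_iff.mp hlt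
    obtain ⟨hΓ, hΓs⟩ := iInf_lt_iff.mp hΓlt
    have hΓs' : setSpan Γ ≤ (s : ℕ∞) := by
      rcases eq_or_ne (setSpan Γ) ⊤ with ht | ht
      · exact absurd (ht ▸ hΓs) (by simp)
      · obtain ⟨t, htt⟩ := WithTop.ne_top_iff_exists.mp ht
        rw [← htt] at hΓs ⊢
        exact ENat.coe_le_coe.mpr (Nat.lt_succ_iff.mp (ENat.coe_lt_coe.mp hΓs))
    have := aux_complexity_le x n s hn Γ hΓ hΓs'
    rw [← hs]
    calc ((complexityZ x n : ℕ) : ℕ∞) ≤ ((n + s : ℕ) : ℕ∞) := ENat.coe_le_coe.mpr this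
      _ = (n : ℕ∞) + (s : ℕ∞) := by push_cast; rfl
end

section
/- Let x ∈ {0,1}^ℤ be a bi-infinite word of factor complexity p_x(n) = n + 1 for all n. Then the set {0, 1} is a string attractor of x if and only if x_{[-n, n+1]} = r_n(x) 01 l_n(x) for all n ≥ 0, or x_{[-n, n+1]} = r_n(x) 10 l_n(x) for all n ≥ 0. -/
open scoped ENat Classical

/-! ### Auxiliary development -/

namespace AttrAux2025

variable {A : Type*}

lemma subwordZ_eq_map (x : ℤ → A) (i : ℤ) (n : ℕ) :
    subwordZ x i n = List.map (fun j : ℕ => x (i + (j : ℤ))) (List.range n) := by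
  unfold subwordZ
  show List.map _ ((List.range n).flatMap fun a => [((a : ℕ) : ℤ)]) = _
  rw [← List.map_eq_flatMap, List.map_map]
  rfl

lemma length_subwordZ (x : ℤ → A) (i : ℤ) (n : ℕ) : (subwordZ x i n).length = n := by
  rw [subwordZ_eq_map, List.length_map, List.length_range]

lemma getElem_subwordZ (x : ℤ → A) {i : ℤ} {n t : ℕ} (h : t < (subwordZ x i n).length) :
    (subwordZ x i n)[t] = x (i + t) := by
  simp only [subwordZ_eq_map, List.getElem_map, List.getElem_range]

lemma subwordZ_eq_iff (x : ℤ → A) {i j : ℤ} {n : ℕ} :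
    subwordZ x i n = subwordZ x j n ↔ ∀ t : ℕ, t < n → x (i + t) = x (j + t) := by
  constructor
  · intro h t ht
    have h1 : t < (subwordZ x i n).length := by rw [length_subwordZ]; exact ht
    have h2 := List.getElem_of_eq h h1
    rw [getElem_subwordZ, getElem_subwordZ] at h2
    exact h2
  · intro H
    apply List.ext_getElem (by rw [length_subwordZ, length_subwordZ])
    intro t h1 h2
    rw [getElem_subwordZ, getElem_subwordZ]
    exact H t (by rw [length_subwordZ] at h1; exact h1)

lemma subwordZ_snoc (x : ℤ → A) (i : ℤ) (n : ℕ) :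
    subwordZ x i (n + 1) = subwordZ x i n ++ [x (i + n)] := by
  simp [subwordZ_eq_map, List.range_succ]

lemma subwordZ_cons (x : ℤ → A) (i : ℤ) (n : ℕ) :
    subwordZ x i (n + 1) = x i :: subwordZ x (i + 1) n := by
  apply List.ext_getElem (by simp [length_subwordZ])
  intro t h1 h2
  rw [getElem_subwordZ]
  cases t with
  | zero => simp
  | succ t =>
    rw [List.getElem_cons_succ, getElem_subwordZ]
    congr 1
    push_cast
    ring

lemma subwordZ_append (x : ℤ → A) (i : ℤ) (a b : ℕ) :
    subwordZ x i (a + b) = subwordZ x i a ++ subwordZ x (i + a) b := by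
  induction b with
  | zero => simp [subwordZ_eq_map]
  | succ b ih =>
    have h : a + (b + 1) = (a + b) + 1 := by ring
    rw [h, subwordZ_snoc, ih, subwordZ_snoc, List.append_assoc]
    congr 3
    push_cast
    ring

lemma subwordZ_prefix_eq (x : ℤ → A) {i j : ℤ} {n : ℕ}
    (h : subwordZ x i (n + 1) = subwordZ x j (n + 1)) : subwordZ x i n = subwordZ x j n := by
  rw [subwordZ_snoc, subwordZ_snoc] at h
  exact (List.append_inj h (by rw [length_subwordZ, length_subwordZ])).1

lemma subwordZ_suffix_eq (x : ℤ → A) {i j : ℤ} {n : ℕ}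
    (h : subwordZ x i (n + 1) = subwordZ x j (n + 1)) :
    subwordZ x (i + 1) n = subwordZ x (j + 1) n := by
  rw [subwordZ_cons, subwordZ_cons] at h
  simp only [List.cons.injEq] at h
  exact h.2

lemma occursAt_subwordZ (x : ℤ → A) (i : ℤ) (n : ℕ) : occursAt x (subwordZ x i n) i := by
  unfold occursAt
  rw [length_subwordZ]

lemma isFactorZ_subwordZ (x : ℤ → A) (i : ℤ) (n : ℕ) : IsFactorZ x (subwordZ x i n) :=
  ⟨i, occursAt_subwordZ x i n⟩

lemma occursAt_take {x : ℤ → A} {w : List A} {i : ℤ} (h : occursAt x w i) {a : ℕ}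
    (ha : a ≤ w.length) : occursAt x (w.take a) i := by
  unfold occursAt at h ⊢
  have hsplit : subwordZ x i w.length = subwordZ x i a ++ subwordZ x (i + a) (w.length - a) := by
    rw [← subwordZ_append]
    congr 1
    omega
  have hlen : (w.take a).length = a := by rw [List.length_take]; omega
  rw [hlen]
  conv_rhs => rw [← h, hsplit]
  rw [List.take_left' (length_subwordZ x i a)]

lemma occursAt_drop {x : ℤ → A} {w : List A} {i : ℤ} (h : occursAt x w i) {a : ℕ}
    (ha : a ≤ w.length) : occursAt x (w.drop a) (i + a) := by
  unfold occursAt at h ⊢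
  have hsplit : subwordZ x i w.length = subwordZ x i a ++ subwordZ x (i + a) (w.length - a) := by
    rw [← subwordZ_append]
    congr 1
    omega
  have hlen : (w.drop a).length = w.length - a := by rw [List.length_drop]
  rw [hlen]
  conv_rhs => rw [← h, hsplit]
  rw [List.drop_left' (length_subwordZ x i a)]

lemma finite_length_eq (A : Type*) [Finite A] (k : ℕ) : {w : List A | w.length = k}.Finite := by
  induction k with
  | zero =>
    have h : {w : List A | w.length = 0} = {([] : List A)} := by
      ext w; simp [List.length_eq_zero_iff]
    rw [h]
    exact Set.finite_singleton _
  | succ k ih =>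
    have hsub : {w : List A | w.length = k + 1} ⊆
        Set.image2 (· :: ·) Set.univ {w : List A | w.length = k} := by
      intro w hw
      match w with
      | [] => simp at hw
      | a :: w' => exact ⟨a, trivial, w', by simpa using hw, rfl⟩
    exact (Set.Finite.image2 _ Set.finite_univ ih).subset hsub

/-! ### The binary case -/

def FacSet (x : ℤ → Fin 2) (k : ℕ) : Set (List (Fin 2)) := {w | w.length = k ∧ IsFactorZ x w}

lemma facSet_finite (x : ℤ → Fin 2) (k : ℕ) : (FacSet x k).Finite :=
  (finite_length_eq (Fin 2) k).subset fun _ hw => hw.1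

noncomputable def FacFinset (x : ℤ → Fin 2) (k : ℕ) : Finset (List (Fin 2)) :=
  (facSet_finite x k).toFinset

lemma mem_facFinset (x : ℤ → Fin 2) {k : ℕ} {w : List (Fin 2)} :
    w ∈ FacFinset x k ↔ w.length = k ∧ IsFactorZ x w := by
  simp [FacFinset, FacSet]

lemma card_facFinset (x : ℤ → Fin 2) (hcomp : ∀ n : ℕ, complexityZ x n = n + 1) (k : ℕ) :
    (FacFinset x k).card = k + 1 := by
  have h1 : (FacSet x k).ncard = complexityZ x k := by
    rw [← Nat.card_coe_set_eq]
    exact Nat.card_congr (Equiv.subtypeEquivRight fun w => Iff.rfl)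
  rw [FacFinset, ← Set.ncard_eq_toFinset_card _ (facSet_finite x k), h1, hcomp]

def WinInj (x : ℤ → Fin 2) (k : ℕ) : Prop :=
  ∀ i j : ℤ, 1 - (k : ℤ) ≤ i → i ≤ 1 → 1 - (k : ℤ) ≤ j → j ≤ 1 →
    subwordZ x i k = subwordZ x j k → i = j

def Central (x : ℤ → Fin 2) (k : ℕ) : Prop :=
  ∀ w : List (Fin 2), w.length = k → IsFactorZ x w →
    ∃ i : ℤ, 1 - (k : ℤ) ≤ i ∧ i ≤ 1 ∧ occursAt x w i

lemma card_Icc_win (k : ℕ) : (Finset.Icc (1 - (k : ℤ)) 1).card = k + 1 := by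
  rw [Int.card_Icc]
  omega

lemma winInj_iff_central (x : ℤ → Fin 2) (hcomp : ∀ n : ℕ, complexityZ x n = n + 1) (k : ℕ) :
    WinInj x k ↔ Central x k := by
  classical
  have hsub : (Finset.Icc (1 - (k : ℤ)) 1).image (fun i => subwordZ x i k) ⊆ FacFinset x k := by
    intro w hw
    rw [Finset.mem_image] at hw
    obtain ⟨i, _, rfl⟩ := hw
    rw [mem_facFinset]
    exact ⟨length_subwordZ x i k, isFactorZ_subwordZ x i k⟩
  constructor
  · intro hD w hw hf
    have hinj : Set.InjOn (fun i => subwordZ x i k) ↑(Finset.Icc (1 - (k : ℤ)) 1) := by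
      intro i hi j hj hij
      rw [Finset.coe_Icc, Set.mem_Icc] at hi hj
      exact hD i j hi.1 hi.2 hj.1 hj.2 hij
    have hcard : ((Finset.Icc (1 - (k : ℤ)) 1).image (fun i => subwordZ x i k)).card = k + 1 := by
      rw [Finset.card_image_iff.mpr hinj, card_Icc_win]
    have heq := Finset.eq_of_subset_of_card_le hsub
      (by rw [hcard, card_facFinset x hcomp])
    have hwmem : w ∈ FacFinset x k := (mem_facFinset x).mpr ⟨hw, hf⟩
    rw [← heq, Finset.mem_image] at hwmem
    obtain ⟨i, hi, hiw⟩ := hwmem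
    rw [Finset.mem_Icc] at hi
    refine ⟨i, hi.1, hi.2, ?_⟩
    unfold occursAt
    rw [hw]
    exact hiw
  · intro hA i j hi1 hi2 hj1 hj2 hij
    have hsup : FacFinset x k ⊆ (Finset.Icc (1 - (k : ℤ)) 1).image (fun i => subwordZ x i k) := by
      intro w hw
      rw [mem_facFinset] at hw
      obtain ⟨i0, h1, h2, hocc⟩ := hA w hw.1 hw.2
      rw [Finset.mem_image]
      refine ⟨i0, Finset.mem_Icc.mpr ⟨h1, h2⟩, ?_⟩
      unfold occursAt at hocc
      rw [hw.1] at hocc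
      exact hocc
    have heq := Finset.Subset.antisymm hsub hsup
    have hcard : ((Finset.Icc (1 - (k : ℤ)) 1).image (fun i => subwordZ x i k)).card
        = (Finset.Icc (1 - (k : ℤ)) 1).card := by
      rw [heq, card_facFinset x hcomp, card_Icc_win]
    have hinj := Finset.card_image_iff.mp hcard
    exact hinj (by rw [Finset.coe_Icc]; exact Set.mem_Icc.mpr ⟨hi1, hi2⟩)
      (by rw [Finset.coe_Icc]; exact Set.mem_Icc.mpr ⟨hj1, hj2⟩) hij

lemma attractor_iff_central (x : ℤ → Fin 2) :
    IsAttractorZ x {0, 1} ↔ ∀ k : ℕ, 1 ≤ k → Central x k := by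
  constructor
  · intro hA k hk w hw hf
    have hne : w ≠ [] := by
      intro h
      rw [h] at hw
      simp at hw
      omega
    obtain ⟨i, hocc, p, hp, hip, hpi⟩ := hA w hne hf
    rw [hw] at hpi
    have hp' : p = 0 ∨ p = 1 := by
      rcases hp with hp | hp
      · exact Or.inl hp
      · exact Or.inr hp
    refine ⟨i, ?_, ?_, hocc⟩ <;> omega
  · intro hC w hne hf
    have hk : 1 ≤ w.length := List.length_pos_iff.mpr hne
    obtain ⟨i, h1, h2, hocc⟩ := hC w.length hk w rfl hf
    by_cases hi : i ≤ 0
    · exact ⟨i, hocc, 0, by simp, hi, by omega⟩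
    · exact ⟨i, hocc, 1, by simp, by omega, by omega⟩

lemma exists_right_special (x : ℤ → Fin 2) (hcomp : ∀ n : ℕ, complexityZ x n = n + 1) (n : ℕ) :
    ∃ ρ : List (Fin 2), ρ.length = n ∧ ∃ a b : Fin 2, a ≠ b ∧
      IsFactorZ x (ρ ++ [a]) ∧ IsFactorZ x (ρ ++ [b]) := by
  classical
  have hmap : ∀ w ∈ FacFinset x (n + 1), w.dropLast ∈ FacFinset x n := by
    intro w hw
    rw [mem_facFinset] at hw ⊢
    obtain ⟨hlen, i, hocc⟩ := hw
    have hd : w.dropLast = w.take n := by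
      rw [List.dropLast_eq_take, hlen]
      norm_num
    constructor
    · rw [hd, List.length_take, hlen]; omega
    · exact ⟨i, by rw [hd]; exact occursAt_take hocc (by omega)⟩
  have hcard : (FacFinset x n).card < (FacFinset x (n + 1)).card := by
    rw [card_facFinset x hcomp, card_facFinset x hcomp]; omega
  obtain ⟨w, hwmem, w', hw'mem, hne, heq⟩ :=
    Finset.exists_ne_map_eq_of_card_lt_of_maps_to hcard hmap
  have hwl : w.length = n + 1 := ((mem_facFinset x).mp hwmem).1
  have hw'l : w'.length = n + 1 := ((mem_facFinset x).mp hw'mem).1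
  have hwne : w ≠ [] := by intro h; rw [h] at hwl; simp at hwl
  have hw'ne : w' ≠ [] := by intro h; rw [h] at hw'l; simp at hw'l
  refine ⟨w.dropLast, by rw [List.length_dropLast, hwl]; omega, w.getLast hwne,
    w'.getLast hw'ne, ?_, ?_, ?_⟩
  · intro hab
    apply hne
    rw [← List.dropLast_append_getLast hwne, ← List.dropLast_append_getLast hw'ne, heq, hab]
  · rw [List.dropLast_append_getLast hwne]
    exact ((mem_facFinset x).mp hwmem).2
  · rw [heq, List.dropLast_append_getLast hw'ne]
    exact ((mem_facFinset x).mp hw'mem).2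

lemma exists_left_special (x : ℤ → Fin 2) (hcomp : ∀ n : ℕ, complexityZ x n = n + 1) (n : ℕ) :
    ∃ l : List (Fin 2), l.length = n ∧ ∃ a b : Fin 2, a ≠ b ∧
      IsFactorZ x (a :: l) ∧ IsFactorZ x (b :: l) := by
  classical
  have hmap : ∀ w ∈ FacFinset x (n + 1), w.tail ∈ FacFinset x n := by
    intro w hw
    rw [mem_facFinset] at hw ⊢
    obtain ⟨hlen, i, hocc⟩ := hw
    have hd : w.tail = w.drop 1 := (List.drop_one (l := w)).symm
    constructor
    · rw [hd, List.length_drop, hlen]; omega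
    · exact ⟨i + 1, by rw [hd]; exact occursAt_drop hocc (by omega)⟩
  have hcard : (FacFinset x n).card < (FacFinset x (n + 1)).card := by
    rw [card_facFinset x hcomp, card_facFinset x hcomp]; omega
  obtain ⟨w, hwmem, w', hw'mem, hne, heq⟩ :=
    Finset.exists_ne_map_eq_of_card_lt_of_maps_to hcard hmap
  have hwl : w.length = n + 1 := ((mem_facFinset x).mp hwmem).1
  have hw'l : w'.length = n + 1 := ((mem_facFinset x).mp hw'mem).1
  have hwne : w ≠ [] := by intro h; rw [h] at hwl; simp at hwl
  have hw'ne : w' ≠ [] := by intro h; rw [h] at hw'l; simp at hw'l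
  refine ⟨w.tail, by rw [List.length_tail, hwl]; omega, w.head hwne, w'.head hw'ne,
    ?_, ?_, ?_⟩
  · intro hab
    apply hne
    rw [← List.cons_head_tail hwne, ← List.cons_head_tail hw'ne, heq, hab]
  · rw [List.cons_head_tail hwne]
    exact ((mem_facFinset x).mp hwmem).2
  · rw [heq, List.cons_head_tail hw'ne]
    exact ((mem_facFinset x).mp hw'mem).2

lemma fin2_cases {a b : Fin 2} (hab : a ≠ b) (c : Fin 2) : c = a ∨ c = b := by
  have h : ∀ a b c : Fin 2, a ≠ b → (c = a ∨ c = b) := by decide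
  exact h a b c hab

lemma fin2_succ_ne : ∀ a : Fin 2, a + 1 ≠ a := by decide

lemma winInj_zero (x : ℤ → Fin 2) : WinInj x 0 := by
  intro i j hi1 hi2 hj1 hj2 _
  push_cast at hi1 hj1
  omega

lemma rspecial_localize (x : ℤ → Fin 2) (hcomp : ∀ n : ℕ, complexityZ x n = n + 1)
    (hD : ∀ k : ℕ, WinInj x k) {n : ℕ} {ρ : List (Fin 2)} {a b : Fin 2}
    (hρ : ρ.length = n) (hab : a ≠ b) (hfa : IsFactorZ x (ρ ++ [a]))
    (hfb : IsFactorZ x (ρ ++ [b])) : ρ = subwordZ x (-(n : ℤ)) n := by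
  have hcen : Central x (n + 1) := (winInj_iff_central x hcomp (n + 1)).mp (hD (n + 1))
  have hlena : (ρ ++ [a]).length = n + 1 := by simp [hρ]
  have hlenb : (ρ ++ [b]).length = n + 1 := by simp [hρ]
  obtain ⟨ia, ha1, ha2, hocca⟩ := hcen (ρ ++ [a]) hlena hfa
  obtain ⟨ib, hb1, hb2, hoccb⟩ := hcen (ρ ++ [b]) hlenb hfb
  push_cast at ha1 hb1
  have hρa : subwordZ x ia n = ρ := by
    have h := occursAt_take hocca (a := n) (by omega)
    unfold occursAt at h
    rw [List.take_left' hρ] at h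
    rw [hρ] at h
    exact h
  have hρb : subwordZ x ib n = ρ := by
    have h := occursAt_take hoccb (a := n) (by omega)
    unfold occursAt at h
    rw [List.take_left' hρ] at h
    rw [hρ] at h
    exact h
  have hne : ia ≠ ib := by
    intro h
    unfold occursAt at hocca hoccb
    rw [hlena] at hocca
    rw [hlenb] at hoccb
    rw [h, hoccb] at hocca
    simp only [List.append_cancel_left_eq, List.cons.injEq] at hocca
    exact hab hocca.1.symm
  by_cases hia : ia = -(n : ℤ)
  · rw [← hρa, hia]
  · by_cases hib : ib = -(n : ℤ)
    · rw [← hρb, hib]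
    · exact absurd (hD n ia ib (by omega) ha2 (by omega) hb2 (hρa.trans hρb.symm)) hne

lemma lspecial_localize (x : ℤ → Fin 2) (hcomp : ∀ n : ℕ, complexityZ x n = n + 1)
    (hD : ∀ k : ℕ, WinInj x k) {n : ℕ} {l : List (Fin 2)} {a b : Fin 2}
    (hl : l.length = n) (hab : a ≠ b) (hfa : IsFactorZ x (a :: l))
    (hfb : IsFactorZ x (b :: l)) : l = subwordZ x 2 n := by
  have hcen : Central x (n + 1) := (winInj_iff_central x hcomp (n + 1)).mp (hD (n + 1))
  have hlena : (a :: l).length = n + 1 := by simp [hl]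
  have hlenb : (b :: l).length = n + 1 := by simp [hl]
  obtain ⟨ia, ha1, ha2, hocca⟩ := hcen (a :: l) hlena hfa
  obtain ⟨ib, hb1, hb2, hoccb⟩ := hcen (b :: l) hlenb hfb
  push_cast at ha1 hb1
  have hla : subwordZ x (ia + 1) n = l := by
    have h := occursAt_drop hocca (a := 1) (by omega)
    unfold occursAt at h
    simp only [List.drop_one, List.tail_cons] at h
    rw [hl] at h
    exact h
  have hlb : subwordZ x (ib + 1) n = l := by
    have h := occursAt_drop hoccb (a := 1) (by omega)
    unfold occursAt at h
    simp only [List.drop_one, List.tail_cons] at h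
    rw [hl] at h
    exact h
  have hne : ia ≠ ib := by
    intro h
    unfold occursAt at hocca hoccb
    rw [hlena] at hocca
    rw [hlenb] at hoccb
    rw [h, hoccb] at hocca
    simp only [List.cons.injEq] at hocca
    exact hab hocca.1.symm
  by_cases hia : ia = 1
  · rw [← hla, hia]
    norm_num
  · by_cases hib : ib = 1
    · rw [← hlb, hib]
      norm_num
    · exact absurd (by
        have := hD n (ia + 1) (ib + 1) (by omega) (by omega) (by omega) (by omega)
          (hla.trans hlb.symm)
        omega) hne

lemma subword_split (x : ℤ → Fin 2) (n : ℕ) :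
    subwordZ x (-(n : ℤ)) (2 * n + 2)
      = subwordZ x (-(n : ℤ)) n ++ subwordZ x 0 2 ++ subwordZ x 2 n := by
  have h1 : 2 * n + 2 = n + (2 + n) := by ring
  rw [h1, subwordZ_append x (-(n : ℤ)) n (2 + n), subwordZ_append x (-(n : ℤ) + n) 2 n]
  have e1 : -(n : ℤ) + (n : ℤ) = 0 := by ring
  have e2 : -(n : ℤ) + (n : ℤ) + (2 : ℕ) = 2 := by push_cast; ring
  rw [e1] at e2 ⊢
  rw [e2, List.append_assoc]

lemma subword_zero_two (x : ℤ → Fin 2) : subwordZ x 0 2 = [x 0, x 1] := by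
  have h1 := subwordZ_cons x 0 1
  have h2 := subwordZ_cons x (0 + 1) 0
  norm_num at h1 h2
  rw [h1, h2]
  have h0 : subwordZ x 2 0 = [] := by
    simp [subwordZ_eq_map]
  rw [h0]

lemma bothext_right (x : ℤ → Fin 2) {u : List (Fin 2)} (h : RightSpecialZ x u) (c : Fin 2) :
    IsFactorZ x (u ++ [c]) := by
  obtain ⟨a, b, hab, hfa, hfb⟩ := h
  rcases fin2_cases hab c with rfl | rfl
  · exact hfa
  · exact hfb

lemma bothext_left (x : ℤ → Fin 2) {u : List (Fin 2)} (h : LeftSpecialZ x u) (c : Fin 2) :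
    IsFactorZ x (c :: u) := by
  obtain ⟨a, b, hab, hfa, hfb⟩ := h
  rcases fin2_cases hab c with rfl | rfl
  · exact hfa
  · exact hfb

lemma no_period (x : ℤ → Fin 2) (hcomp : ∀ n : ℕ, complexityZ x n = n + 1)
    (hRS : ∀ n : ℕ, RightSpecialZ x (subwordZ x (-(n : ℤ)) n))
    (hLS : ∀ n : ℕ, LeftSpecialZ x (subwordZ x 2 n))
    (m : ℕ) (hm : 1 ≤ m) (hD : WinInj x m)
    (hP : ∀ t : ℕ, t ≤ m → x (-(m : ℤ) + t) = x (1 + t)) : False := by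
  classical
  have hper : ∀ j : ℤ, -(m : ℤ) ≤ j → j ≤ 0 → x j = x (j + ((m : ℤ) + 1)) := by
    intro j h1 h2
    have ht : (((j + m).toNat : ℤ)) = j + m := Int.toNat_of_nonneg (by omega)
    have h := hP (j + m).toNat (by omega)
    rw [show -(m : ℤ) + ((j + m).toNat : ℤ) = j by rw [ht]; ring,
        show (1 : ℤ) + ((j + m).toNat : ℤ) = j + ((m : ℤ) + 1) by rw [ht]; ring] at h
    exact h
  have hWm1 : subwordZ x 1 m = subwordZ x (-(m : ℤ)) m := by
    rw [subwordZ_eq_iff]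
    intro t ht
    exact (hP t (by omega)).symm
  have hWm1m : subwordZ x (1 - (m : ℤ)) m = subwordZ x 2 m := by
    rw [subwordZ_eq_iff]
    intro t ht
    have h := hper (1 - (m : ℤ) + t) (by omega) (by omega)
    rw [h]
    congr 1
    ring
  obtain ⟨c, hcne, hfc⟩ : ∃ c : Fin 2, c ≠ x 0 ∧
      IsFactorZ x (subwordZ x (-(m : ℤ)) m ++ [c]) :=
    ⟨x 0 + 1, fin2_succ_ne (x 0), bothext_right x (hRS m) _⟩
  obtain ⟨c', hc'ne, hfc'⟩ : ∃ c' : Fin 2, c' ≠ x 1 ∧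
      IsFactorZ x (c' :: subwordZ x 2 m) :=
    ⟨x 1 + 1, fin2_succ_ne (x 1), bothext_left x (hLS m) _⟩
  have hxm : x (-(m : ℤ)) = x 1 := by
    have h := hP 0 (by omega)
    simpa using h
  -- injectivity of windows of length m+1 on [-m, 0]
  have hinj : ∀ i j : ℤ, -(m : ℤ) ≤ i → i ≤ 0 → -(m : ℤ) ≤ j → j ≤ 0 →
      subwordZ x i (m + 1) = subwordZ x j (m + 1) → i = j := by
    intro i j hi1 hi2 hj1 hj2 hij
    have h := hD (i + 1) (j + 1) (by omega) (by omega) (by omega) (by omega)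
      (subwordZ_suffix_eq x hij)
    omega
  have hinj' : Set.InjOn (fun i => subwordZ x i (m + 1)) ↑(Finset.Icc (-(m : ℤ)) 0) := by
    intro i hi j hj hij
    rw [Finset.coe_Icc, Set.mem_Icc] at hi hj
    exact hinj i j hi.1 hi.2 hj.1 hj.2 hij
  set Tw := (Finset.Icc (-(m : ℤ)) 0).image (fun i => subwordZ x i (m + 1)) with hTw
  have hTwcard : Tw.card = m + 1 := by
    rw [hTw, Finset.card_image_iff.mpr hinj', Int.card_Icc]
    omega
  set u1 : List (Fin 2) := subwordZ x (-(m : ℤ)) m ++ [c] with hu1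
  set u2 : List (Fin 2) := c' :: subwordZ x 2 m with hu2
  have hu1len : u1.length = m + 1 := by simp [hu1, length_subwordZ]
  have hu2len : u2.length = m + 1 := by simp [hu2, length_subwordZ]
  have hu1mem : u1 ∉ Tw := by
    intro hmem
    rw [hTw, Finset.mem_image] at hmem
    obtain ⟨i, hi, hiu⟩ := hmem
    rw [Finset.mem_Icc] at hi
    rw [subwordZ_snoc, hu1] at hiu
    obtain ⟨hWi, hc⟩ := List.append_inj hiu (by rw [length_subwordZ, length_subwordZ])
    have hc2 : x (i + m) = c := by simpa using hc
    by_cases hi2 : i = -(m : ℤ)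
    · apply hcne
      rw [← hc2, hi2]
      congr 1
      ring
    · have h := hD i 1 (by omega) (by omega) (by omega) (by omega) (hWi.trans hWm1.symm)
      omega
  have hu2mem : u2 ∉ Tw := by
    intro hmem
    rw [hTw, Finset.mem_image] at hmem
    obtain ⟨i, hi, hiu⟩ := hmem
    rw [Finset.mem_Icc] at hi
    rw [subwordZ_cons, hu2] at hiu
    simp only [List.cons.injEq] at hiu
    obtain ⟨hhd, htl⟩ := hiu
    by_cases hi2 : i = -(m : ℤ)
    · apply hc'ne
      rw [← hhd, hi2, hxm]
    · have h := hD (i + 1) (1 - (m : ℤ)) (by omega) (by omega) (by omega) (by omega)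
        (htl.trans hWm1m.symm)
      omega
  have hu12 : u1 ≠ u2 := by
    intro h
    have hA : subwordZ x (-(m : ℤ)) m = x (-(m : ℤ)) :: subwordZ x (-(m : ℤ) + 1) (m - 1) := by
      have hc := subwordZ_cons x (-(m : ℤ)) (m - 1)
      rw [show (m - 1) + 1 = m by omega] at hc
      exact hc
    rw [hu1, hu2, hA] at h
    simp only [List.cons_append, List.cons.injEq] at h
    exact hc'ne (h.1.symm.trans hxm)
  have hsubF : insert u1 (insert u2 Tw) ⊆ FacFinset x (m + 1) := by
    intro w hw
    rw [Finset.mem_insert, Finset.mem_insert] at hw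
    rcases hw with rfl | rfl | hw
    · exact (mem_facFinset x).mpr ⟨hu1len, hfc⟩
    · exact (mem_facFinset x).mpr ⟨hu2len, hfc'⟩
    · rw [hTw, Finset.mem_image] at hw
      obtain ⟨i, _, rfl⟩ := hw
      exact (mem_facFinset x).mpr ⟨length_subwordZ x i (m + 1), isFactorZ_subwordZ x i (m + 1)⟩
  have hcard2 : (insert u1 (insert u2 Tw)).card = m + 3 := by
    rw [Finset.card_insert_of_notMem (by
        rw [Finset.mem_insert]
        push_neg
        exact ⟨hu12, hu1mem⟩),
      Finset.card_insert_of_notMem hu2mem, hTwcard]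
  have hle := Finset.card_le_card hsubF
  rw [hcard2, card_facFinset x hcomp] at hle
  omega

lemma winInj_of_specials (x : ℤ → Fin 2) (hcomp : ∀ n : ℕ, complexityZ x n = n + 1)
    (hRS : ∀ n : ℕ, RightSpecialZ x (subwordZ x (-(n : ℤ)) n))
    (hLS : ∀ n : ℕ, LeftSpecialZ x (subwordZ x 2 n))
    (hne : x 0 ≠ x 1) : ∀ k : ℕ, WinInj x k := by
  intro k
  induction k with
  | zero => exact winInj_zero x
  | succ k ih =>
    rcases Nat.eq_zero_or_pos k with rfl | hk
    · intro i j hi1 hi2 hj1 hj2 h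
      by_contra hne2
      push_cast at hi1 hj1
      have hpt := (subwordZ_eq_iff x).mp h 0 (by omega)
      simp only [Nat.cast_zero, add_zero] at hpt
      have hij : (i = 0 ∧ j = 1) ∨ (i = 1 ∧ j = 0) := by omega
      rcases hij with ⟨rfl, rfl⟩ | ⟨rfl, rfl⟩
      · exact hne hpt
      · exact hne hpt.symm
    · intro i j hi1 hi2 hj1 hj2 h
      push_cast at hi1 hj1
      have key : ∀ i j : ℤ, -(k : ℤ) ≤ i → j ≤ 1 → i < j →
          subwordZ x i (k + 1) = subwordZ x j (k + 1) → False := by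
        intro i j hi1' hj2' hlt hij
        have hpre := subwordZ_prefix_eq x hij
        have hsuf := subwordZ_suffix_eq x hij
        by_cases hii : 1 - (k : ℤ) ≤ i
        · have := ih i j hii (by omega) (by omega) (by omega) hpre
          omega
        · have hieq : i = -(k : ℤ) := by omega
          by_cases hjj : j ≤ 0
          · have := ih (i + 1) (j + 1) (by omega) (by omega) (by omega) (by omega) hsuf
            omega
          · have hjeq : j = 1 := by omega
            apply no_period x hcomp hRS hLS k hk ih
            intro t ht
            have hpt := (subwordZ_eq_iff x).mp hij t (by omega)
            rw [hieq, hjeq] at hpt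
            exact hpt
      rcases lt_trichotomy i j with hlt | heq | hlt
      · exact absurd (key i j (by omega) (by omega) hlt h) (by simp)
      · exact heq
      · exact absurd (key j i (by omega) (by omega) hlt h.symm) (by simp)

lemma backward_extract (x : ℤ → Fin 2) (c₁ c₂ : Fin 2)
    (hyp : ∀ n : ℕ, ∃ r l : List (Fin 2), r.length = n ∧ RightSpecialZ x r ∧ l.length = n ∧
      LeftSpecialZ x l ∧ subwordZ x (-(n : ℤ)) (2 * n + 2) = r ++ [c₁, c₂] ++ l) :
    (∀ n : ℕ, RightSpecialZ x (subwordZ x (-(n : ℤ)) n))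
      ∧ (∀ n : ℕ, LeftSpecialZ x (subwordZ x 2 n)) ∧ x 0 = c₁ ∧ x 1 = c₂ := by
  have key : ∀ n : ℕ, RightSpecialZ x (subwordZ x (-(n : ℤ)) n)
      ∧ LeftSpecialZ x (subwordZ x 2 n) ∧ x 0 = c₁ ∧ x 1 = c₂ := by
    intro n
    obtain ⟨r, l, hr, hRS, hl, hLS, heq⟩ := hyp n
    rw [subword_split] at heq
    obtain ⟨h12, hWl⟩ := List.append_inj heq (by
      simp [length_subwordZ, hr])
    obtain ⟨hWr, hW02⟩ := List.append_inj h12 (by rw [length_subwordZ, hr])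
    rw [subword_zero_two] at hW02
    simp only [List.cons.injEq] at hW02
    refine ⟨by rw [hWr]; exact hRS, by rw [hWl]; exact hLS, hW02.1, hW02.2.1⟩
  exact ⟨fun n => (key n).1, fun n => (key n).2.1, (key 0).2.2.1, (key 0).2.2.2⟩

lemma backward_main (x : ℤ → Fin 2) (hcomp : ∀ n : ℕ, complexityZ x n = n + 1)
    (c₁ c₂ : Fin 2) (hcc : c₁ ≠ c₂)
    (hyp : ∀ n : ℕ, ∃ r l : List (Fin 2), r.length = n ∧ RightSpecialZ x r ∧ l.length = n ∧
      LeftSpecialZ x l ∧ subwordZ x (-(n : ℤ)) (2 * n + 2) = r ++ [c₁, c₂] ++ l) :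
    IsAttractorZ x {0, 1} := by
  obtain ⟨hRS, hLS, hx0, hx1⟩ := backward_extract x c₁ c₂ hyp
  have hne : x 0 ≠ x 1 := by rw [hx0, hx1]; exact hcc
  have hD := winInj_of_specials x hcomp hRS hLS hne
  apply (attractor_iff_central x).mpr
  intro k hk
  exact (winInj_iff_central x hcomp k).mp (hD k)

lemma forward_main (x : ℤ → Fin 2) (hcomp : ∀ n : ℕ, complexityZ x n = n + 1)
    (hAtt : IsAttractorZ x {0, 1}) :
    ((∀ n : ℕ, ∃ r l : List (Fin 2),
        r.length = n ∧ RightSpecialZ x r ∧ l.length = n ∧ LeftSpecialZ x l ∧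
        subwordZ x (-(n : ℤ)) (2 * n + 2) = r ++ [0, 1] ++ l) ∨
     (∀ n : ℕ, ∃ r l : List (Fin 2),
        r.length = n ∧ RightSpecialZ x r ∧ l.length = n ∧ LeftSpecialZ x l ∧
        subwordZ x (-(n : ℤ)) (2 * n + 2) = r ++ [1, 0] ++ l)) := by
  have hcen : ∀ k : ℕ, 1 ≤ k → Central x k := (attractor_iff_central x).mp hAtt
  have hD : ∀ k : ℕ, WinInj x k := by
    intro k
    cases k with
    | zero => exact winInj_zero x
    | succ k => exact (winInj_iff_central x hcomp (k + 1)).mpr (hcen (k + 1) (by omega))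
  have hne : x 0 ≠ x 1 := by
    intro h
    have h01 : subwordZ x 0 1 = subwordZ x 1 1 := by
      rw [subwordZ_eq_iff]
      intro t ht
      have ht0 : t = 0 := by omega
      subst ht0
      simpa using h
    have := hD 1 0 1 (by norm_num) (by norm_num) (by norm_num) (by norm_num) h01
    norm_num at this
  have hRS : ∀ n : ℕ, RightSpecialZ x (subwordZ x (-(n : ℤ)) n) := by
    intro n
    obtain ⟨ρ, hρ, a, b, hab, hfa, hfb⟩ := exists_right_special x hcomp n
    have heq := rspecial_localize x hcomp hD hρ hab hfa hfb
    rw [← heq]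
    exact ⟨a, b, hab, hfa, hfb⟩
  have hLS : ∀ n : ℕ, LeftSpecialZ x (subwordZ x 2 n) := by
    intro n
    obtain ⟨l, hl, a, b, hab, hfa, hfb⟩ := exists_left_special x hcomp n
    have heq := lspecial_localize x hcomp hD hl hab hfa hfb
    rw [← heq]
    exact ⟨a, b, hab, hfa, hfb⟩
  have hval : (x 0 = 0 ∧ x 1 = 1) ∨ (x 0 = 1 ∧ x 1 = 0) := by
    rcases fin2_cases (show (0 : Fin 2) ≠ 1 by decide) (x 0) with h0 | h0 <;>
      rcases fin2_cases (show (0 : Fin 2) ≠ 1 by decide) (x 1) with h1 | h1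
    · exact absurd (h0.trans h1.symm) hne
    · exact Or.inl ⟨h0, h1⟩
    · exact Or.inr ⟨h0, h1⟩
    · exact absurd (h0.trans h1.symm) hne
  rcases hval with ⟨h0, h1⟩ | ⟨h0, h1⟩
  · left
    intro n
    refine ⟨subwordZ x (-(n : ℤ)) n, subwordZ x 2 n, length_subwordZ x _ n, hRS n,
      length_subwordZ x _ n, hLS n, ?_⟩
    rw [subword_split, subword_zero_two, h0, h1]
  · right
    intro n
    refine ⟨subwordZ x (-(n : ℤ)) n, subwordZ x 2 n, length_subwordZ x _ n, hRS n,
      length_subwordZ x _ n, hLS n, ?_⟩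
    rw [subword_split, subword_zero_two, h0, h1]

end AttrAux2025

/-- For `x ∈ {0,1}^ℤ` with `p_x(n) = n + 1` for all `n`, the set `{0,1}` is a
string attractor of `x` iff `x_{[-n,n+1]} = r_n(x) 01 l_n(x)` for all `n`, or
`x_{[-n,n+1]} = r_n(x) 10 l_n(x)` for all `n`. -/
theorem attractor_zero_one_iff_characteristic_form (x : ℤ → Fin 2)
    (hcomp : ∀ n : ℕ, complexityZ x n = n + 1) :
    IsAttractorZ x {0, 1} ↔
      ((∀ n : ℕ, ∃ r l : List (Fin 2),
          r.length = n ∧ RightSpecialZ x r ∧ l.length = n ∧ LeftSpecialZ x l ∧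
          subwordZ x (-(n : ℤ)) (2 * n + 2) = r ++ [0, 1] ++ l) ∨
       (∀ n : ℕ, ∃ r l : List (Fin 2),
          r.length = n ∧ RightSpecialZ x r ∧ l.length = n ∧ LeftSpecialZ x l ∧
          subwordZ x (-(n : ℤ)) (2 * n + 2) = r ++ [1, 0] ++ l)) := by
  constructor
  · exact AttrAux2025.forward_main x hcomp
  · intro h
    rcases h with h | h
    · exact AttrAux2025.backward_main x hcomp 0 1 (by decide) h
    · exact AttrAux2025.backward_main x hcomp 1 0 (by decide) h
end

section
/- An aperiodic bi-infinite word x over {0,1} satisfies span(x) = 1 if and only if there exists k ∈ ℤ such that S^k(x) is a characteristic Sturmian word. -/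
open scoped ENat Classical

namespace SpanOne

lemma subwordZ_def {A : Type*} (x : ℤ → A) (i : ℤ) (n : ℕ) :
    subwordZ x i n = (List.range n).map (fun j : ℕ => x (i + (j : ℤ))) := by
  unfold subwordZ
  simp only [bind_pure_comp, List.map_eq_map, List.map_map]
  rfl

@[simp] lemma length_subwordZ (x : ℤ → Fin 2) (i : ℤ) (n : ℕ) :
    (subwordZ x i n).length = n := by
  rw [subwordZ_def, List.length_map, List.length_range]

lemma getElem_subwordZ (x : ℤ → Fin 2) {i : ℤ} {n j : ℕ} (hj : j < n) :
    (subwordZ x i n)[j]'(by simpa using hj) = x (i + j) := by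
  simp only [subwordZ_def, List.getElem_map, List.getElem_range]

lemma subwordZ_eq_iff {x : ℤ → Fin 2} {i i' : ℤ} {n : ℕ} :
    subwordZ x i n = subwordZ x i' n ↔ ∀ j : ℕ, j < n → x (i + j) = x (i' + j) := by
  constructor
  · intro h j hj
    have h1 : (subwordZ x i n)[j]'(by simpa using hj)
        = (subwordZ x i' n)[j]'(by simpa using hj) := by
      simp only [h]
    rwa [getElem_subwordZ x hj, getElem_subwordZ x hj] at h1
  · intro h
    apply List.ext_getElem (by simp)
    intro j h1 h2
    rw [getElem_subwordZ x (by simpa using h1), getElem_subwordZ x (by simpa using h1)]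
    exact h j (by simpa using h1)

lemma occursAt_subwordZ (x : ℤ → Fin 2) (i : ℤ) (n : ℕ) :
    occursAt x (subwordZ x i n) i := by
  rw [occursAt, length_subwordZ]

lemma isFactor_subwordZ (x : ℤ → Fin 2) (i : ℤ) (n : ℕ) :
    IsFactorZ x (subwordZ x i n) :=
  ⟨i, occursAt_subwordZ x i n⟩

lemma subwordZ_append (x : ℤ → Fin 2) (i : ℤ) (m n : ℕ) :
    subwordZ x i (m + n) = subwordZ x i m ++ subwordZ x (i + m) n := by
  simp only [subwordZ_def]
  rw [List.range_add, List.map_append, List.map_map]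
  congr 1
  apply List.map_congr_left
  intro j _
  simp only [Function.comp_apply]
  congr 1
  push_cast
  ring

lemma subwordZ_one (x : ℤ → Fin 2) (i : ℤ) : subwordZ x i 1 = [x i] := by
  rw [subwordZ_def, show List.range 1 = [0] from rfl]
  simp

lemma subwordZ_snoc (x : ℤ → Fin 2) (i : ℤ) (n : ℕ) :
    subwordZ x i (n + 1) = subwordZ x i n ++ [x (i + n)] := by
  rw [subwordZ_append, subwordZ_one]

lemma subwordZ_cons (x : ℤ → Fin 2) (i : ℤ) (n : ℕ) :
    subwordZ x i (n + 1) = x i :: subwordZ x (i + 1) n := by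
  have h := subwordZ_append x i 1 n
  rw [Nat.add_comm 1 n] at h
  rw [h, subwordZ_one]
  rfl

def facSet (x : ℤ → Fin 2) (n : ℕ) : Set (List (Fin 2)) :=
  {w | w.length = n ∧ IsFactorZ x w}

lemma subwordZ_mem_facSet (x : ℤ → Fin 2) (i : ℤ) (n : ℕ) :
    subwordZ x i n ∈ facSet x n :=
  ⟨length_subwordZ x i n, isFactor_subwordZ x i n⟩

lemma eq_subwordZ_of_mem_facSet {x : ℤ → Fin 2} {w : List (Fin 2)} {n : ℕ}
    (hw : w ∈ facSet x n) : ∃ i : ℤ, w = subwordZ x i n := by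
  obtain ⟨hl, i, hocc⟩ := hw
  exact ⟨i, by rw [← hocc, hl]⟩

lemma facSet_finite (x : ℤ → Fin 2) (n : ℕ) : (facSet x n).Finite := by
  have h : facSet x n ⊆ Set.range (fun f : Fin n → Fin 2 => List.ofFn f) := by
    rintro w ⟨hw, -⟩
    refine ⟨fun j => w[(j : ℕ)]'(hw ▸ j.2), ?_⟩
    apply List.ext_getElem (by simp [hw])
    intro j h1 h2
    simp
  exact (Set.finite_range _).subset h

lemma complexityZ_eq_ncard (x : ℤ → Fin 2) (n : ℕ) :
    complexityZ x n = (facSet x n).ncard := rfl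

lemma facSet_zero (x : ℤ → Fin 2) : facSet x 0 = {([] : List (Fin 2))} := by
  ext w
  simp only [facSet, Set.mem_setOf_eq, Set.mem_singleton_iff, List.length_eq_zero_iff]
  constructor
  · rintro ⟨h, -⟩; exact h
  · rintro rfl
    refine ⟨rfl, 0, ?_⟩
    rw [occursAt]
    simp [subwordZ_def]

lemma complexityZ_zero (x : ℤ → Fin 2) : complexityZ x 0 = 1 := by
  rw [complexityZ_eq_ncard, facSet_zero, Set.ncard_singleton]

lemma facSet_eq_image_dropLast (x : ℤ → Fin 2) (m : ℕ) :
    facSet x m = List.dropLast '' facSet x (m + 1) := by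
  ext w
  constructor
  · intro hw
    obtain ⟨i, rfl⟩ := eq_subwordZ_of_mem_facSet hw
    refine ⟨subwordZ x i (m + 1), subwordZ_mem_facSet x i (m + 1), ?_⟩
    rw [subwordZ_snoc, List.dropLast_concat]
  · rintro ⟨v, hv, rfl⟩
    obtain ⟨i, rfl⟩ := eq_subwordZ_of_mem_facSet hv
    rw [subwordZ_snoc, List.dropLast_concat]
    exact subwordZ_mem_facSet x i m

lemma facSet_eq_image_tail (x : ℤ → Fin 2) (m : ℕ) :
    facSet x m = List.tail '' facSet x (m + 1) := by
  ext w
  constructor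
  · intro hw
    obtain ⟨i, rfl⟩ := eq_subwordZ_of_mem_facSet hw
    refine ⟨subwordZ x (i - 1) (m + 1), subwordZ_mem_facSet x (i - 1) (m + 1), ?_⟩
    rw [subwordZ_cons, List.tail_cons]
    congr 1
    ring
  · rintro ⟨v, hv, rfl⟩
    obtain ⟨i, rfl⟩ := eq_subwordZ_of_mem_facSet hv
    rw [subwordZ_cons, List.tail_cons]
    exact subwordZ_mem_facSet x (i + 1) m

lemma complexityZ_mono (x : ℤ → Fin 2) (m : ℕ) :
    complexityZ x m ≤ complexityZ x (m + 1) := by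
  rw [complexityZ_eq_ncard, complexityZ_eq_ncard, facSet_eq_image_dropLast]
  exact Set.ncard_image_le (facSet_finite x (m + 1))

lemma complexity_succ_of_right_special {x : ℤ → Fin 2} {m : ℕ} {u : List (Fin 2)}
    (hu : u.length = m) (hRS : RightSpecialZ x u) :
    complexityZ x m + 1 ≤ complexityZ x (m + 1) := by
  obtain ⟨a, b, hab, ⟨ia, hia⟩, ⟨ib, hib⟩⟩ := hRS
  have hua : u ++ [a] ∈ facSet x (m + 1) := ⟨by simp [hu], ⟨ia, hia⟩⟩
  have hub : u ++ [b] ∈ facSet x (m + 1) := ⟨by simp [hu], ⟨ib, hib⟩⟩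
  have hkey : facSet x m = List.dropLast '' (facSet x (m + 1) \ {u ++ [b]}) := by
    ext w
    constructor
    · intro hw
      obtain ⟨i, rfl⟩ := eq_subwordZ_of_mem_facSet hw
      by_cases hc : subwordZ x i (m + 1) = u ++ [b]
      · have hdrop : subwordZ x i m = u := by
          have h2 := congrArg List.dropLast hc
          rwa [subwordZ_snoc, List.dropLast_concat, List.dropLast_concat] at h2
        refine ⟨u ++ [a], ⟨hua, ?_⟩, by rw [List.dropLast_concat, hdrop]⟩
        simp only [Set.mem_singleton_iff]
        intro h
        apply hab
        have h2 := List.append_cancel_left h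
        simpa using h2
      · refine ⟨subwordZ x i (m + 1), ⟨subwordZ_mem_facSet x i (m + 1), hc⟩, ?_⟩
        rw [subwordZ_snoc, List.dropLast_concat]
    · rintro ⟨v, ⟨hv, -⟩, rfl⟩
      obtain ⟨i, rfl⟩ := eq_subwordZ_of_mem_facSet hv
      rw [subwordZ_snoc, List.dropLast_concat]
      exact subwordZ_mem_facSet x i m
  have h1 : complexityZ x m ≤ (facSet x (m + 1) \ {u ++ [b]}).ncard := by
    rw [complexityZ_eq_ncard, hkey]
    exact Set.ncard_image_le ((facSet_finite x (m + 1)).subset Set.diff_subset)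
  have h2 : (facSet x (m + 1) \ {u ++ [b]}).ncard
      = (facSet x (m + 1)).ncard - 1 :=
    Set.ncard_diff_singleton_of_mem hub
  have h3 : 0 < (facSet x (m + 1)).ncard :=
    (Set.ncard_pos (facSet_finite x (m + 1))).mpr ⟨_, hub⟩
  simp only [complexityZ_eq_ncard] at h1 ⊢
  omega

end SpanOne
namespace SpanOne

lemma complexity_two_of_two_leftSpecial {x : ℤ → Fin 2} {m : ℕ} {u v : List (Fin 2)}
    (huv : u ≠ v) (hu : u.length = m) (hv : v.length = m)
    (hLu : LeftSpecialZ x u) (hLv : LeftSpecialZ x v) :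
    complexityZ x m + 2 ≤ complexityZ x (m + 1) := by
  obtain ⟨a1, a2, ha, hfa1, hfa2⟩ := hLu
  obtain ⟨b1, b2, hb, hfb1, hfb2⟩ := hLv
  have ma1 : a1 :: u ∈ facSet x (m + 1) := ⟨by simp [hu], hfa1⟩
  have ma2 : a2 :: u ∈ facSet x (m + 1) := ⟨by simp [hu], hfa2⟩
  have mb2 : b2 :: v ∈ facSet x (m + 1) := ⟨by simp [hv], hfb2⟩
  have hpair : ({a2 :: u, b2 :: v} : Set (List (Fin 2))) ⊆ facSet x (m + 1) := by
    rintro w (rfl | rfl)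
    exacts [ma2, mb2]
  have hne : (a2 :: u) ≠ (b2 :: v) := by
    intro h
    exact huv (by injection h with _ h2)
  have hkey : facSet x m = List.tail '' (facSet x (m + 1) \ {a2 :: u, b2 :: v}) := by
    ext w
    constructor
    · intro hw
      obtain ⟨i, rfl⟩ := eq_subwordZ_of_mem_facSet hw
      have hceq : subwordZ x (i - 1) (m + 1) = x (i - 1) :: subwordZ x i m := by
        rw [subwordZ_cons]
        congr 2
        ring
      by_cases hcu : subwordZ x i m = u
      · refine ⟨a1 :: u, ⟨ma1, ?_⟩, by rw [List.tail_cons, hcu]⟩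
        rintro (h | h)
        · exact ha (by injection h)
        · exact huv (by injection h with _ h2)
      · by_cases hcv : subwordZ x i m = v
        · refine ⟨b1 :: v, ⟨⟨by simp [hv], hfb1⟩, ?_⟩, by rw [List.tail_cons, hcv]⟩
          rintro (h | h)
          · refine huv ?_
            injection h with _ h2
            exact h2.symm
          · exact hb (by injection h)
        · refine ⟨subwordZ x (i - 1) (m + 1), ⟨subwordZ_mem_facSet x (i - 1) (m + 1), ?_⟩, ?_⟩
          · rintro (h | h)
            · rw [hceq] at h
              exact hcu (by injection h)
            · rw [hceq] at h
              exact hcv (by injection h)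
          · rw [hceq, List.tail_cons]
    · rintro ⟨c, ⟨hc, -⟩, rfl⟩
      obtain ⟨i, rfl⟩ := eq_subwordZ_of_mem_facSet hc
      rw [subwordZ_cons, List.tail_cons]
      exact subwordZ_mem_facSet x (i + 1) m
  have h1 : complexityZ x m ≤ (facSet x (m + 1) \ {a2 :: u, b2 :: v}).ncard := by
    rw [complexityZ_eq_ncard, hkey]
    exact Set.ncard_image_le ((facSet_finite x (m + 1)).subset Set.diff_subset)
  have h2 : (facSet x (m + 1) \ {a2 :: u, b2 :: v}).ncard
      = (facSet x (m + 1)).ncard - 2 := by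
    rw [Set.ncard_diff hpair (Set.toFinite _), Set.ncard_pair hne]
  have h3 : 2 ≤ (facSet x (m + 1)).ncard := by
    have := Set.ncard_le_ncard hpair (facSet_finite x (m + 1))
    rwa [Set.ncard_pair hne] at this
  simp only [complexityZ_eq_ncard] at h1 ⊢
  omega

lemma complexity_two_of_two_rightSpecial {x : ℤ → Fin 2} {m : ℕ} {u v : List (Fin 2)}
    (huv : u ≠ v) (hu : u.length = m) (hv : v.length = m)
    (hRu : RightSpecialZ x u) (hRv : RightSpecialZ x v) :
    complexityZ x m + 2 ≤ complexityZ x (m + 1) := by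
  obtain ⟨a1, a2, ha, hfa1, hfa2⟩ := hRu
  obtain ⟨b1, b2, hb, hfb1, hfb2⟩ := hRv
  have ma1 : u ++ [a1] ∈ facSet x (m + 1) := ⟨by simp [hu], hfa1⟩
  have ma2 : u ++ [a2] ∈ facSet x (m + 1) := ⟨by simp [hu], hfa2⟩
  have mb1 : v ++ [b1] ∈ facSet x (m + 1) := ⟨by simp [hv], hfb1⟩
  have mb2 : v ++ [b2] ∈ facSet x (m + 1) := ⟨by simp [hv], hfb2⟩
  have snocinj : ∀ (w w' : List (Fin 2)) (c c' : Fin 2),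
      w ++ [c] = w' ++ [c'] → w.length = w'.length → w = w' ∧ c = c' := by
    intro w w' c c' h hl
    have h1 := List.append_inj h (by omega)
    refine ⟨h1.1, by simpa using h1.2⟩
  have hpair : ({u ++ [a2], v ++ [b2]} : Set (List (Fin 2))) ⊆ facSet x (m + 1) := by
    rintro w (rfl | rfl)
    exacts [ma2, mb2]
  have hne : (u ++ [a2]) ≠ (v ++ [b2]) := by
    intro h
    exact huv (snocinj _ _ _ _ h (by omega)).1
  have hkey : facSet x m = List.dropLast '' (facSet x (m + 1) \ {u ++ [a2], v ++ [b2]}) := by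
    ext w
    constructor
    · intro hw
      obtain ⟨i, rfl⟩ := eq_subwordZ_of_mem_facSet hw
      by_cases hcu : subwordZ x i m = u
      · refine ⟨u ++ [a1], ⟨ma1, ?_⟩, by rw [List.dropLast_concat, hcu]⟩
        rintro (h | h)
        · exact ha (snocinj _ _ _ _ h rfl).2
        · exact huv (snocinj _ _ _ _ h (by omega)).1
      · by_cases hcv : subwordZ x i m = v
        · refine ⟨v ++ [b1], ⟨mb1, ?_⟩, by rw [List.dropLast_concat, hcv]⟩
          rintro (h | h)
          · exact huv ((snocinj _ _ _ _ h (by omega)).1).symm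
          · exact hb (snocinj _ _ _ _ h rfl).2
        · refine ⟨subwordZ x i (m + 1), ⟨subwordZ_mem_facSet x i (m + 1), ?_⟩, ?_⟩
          · rw [subwordZ_snoc]
            rintro (h | h)
            · exact hcu (snocinj _ _ _ _ h (by simp [hu])).1
            · exact hcv (snocinj _ _ _ _ h (by simp [hv])).1
          · rw [subwordZ_snoc, List.dropLast_concat]
    · rintro ⟨c, ⟨hc, -⟩, rfl⟩
      obtain ⟨i, rfl⟩ := eq_subwordZ_of_mem_facSet hc
      rw [subwordZ_snoc, List.dropLast_concat]
      exact subwordZ_mem_facSet x i m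
  have h1 : complexityZ x m ≤ (facSet x (m + 1) \ {u ++ [a2], v ++ [b2]}).ncard := by
    rw [complexityZ_eq_ncard, hkey]
    exact Set.ncard_image_le ((facSet_finite x (m + 1)).subset Set.diff_subset)
  have h2 : (facSet x (m + 1) \ {u ++ [a2], v ++ [b2]}).ncard
      = (facSet x (m + 1)).ncard - 2 := by
    rw [Set.ncard_diff hpair (Set.toFinite _), Set.ncard_pair hne]
  have h3 : 2 ≤ (facSet x (m + 1)).ncard := by
    have := Set.ncard_le_ncard hpair (facSet_finite x (m + 1))
    rwa [Set.ncard_pair hne] at this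
  simp only [complexityZ_eq_ncard] at h1 ⊢
  omega

lemma leftSpecial_unique {x : ℤ → Fin 2} (hc : ∀ n, complexityZ x n = n + 1)
    {m : ℕ} {u v : List (Fin 2)} (hu : u.length = m) (hv : v.length = m)
    (hLu : LeftSpecialZ x u) (hLv : LeftSpecialZ x v) : u = v := by
  by_contra h
  have := complexity_two_of_two_leftSpecial h hu hv hLu hLv
  rw [hc m, hc (m + 1)] at this
  omega

lemma rightSpecial_unique {x : ℤ → Fin 2} (hc : ∀ n, complexityZ x n = n + 1)
    {m : ℕ} {u v : List (Fin 2)} (hu : u.length = m) (hv : v.length = m)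
    (hRu : RightSpecialZ x u) (hRv : RightSpecialZ x v) : u = v := by
  by_contra h
  have := complexity_two_of_two_rightSpecial h hu hv hRu hRv
  rw [hc m, hc (m + 1)] at this
  omega

lemma eventuallyPeriodic_of_low_complexity {x : ℤ → Fin 2} {n : ℕ}
    (h : complexityZ x n ≤ n) : EventuallyPeriodicZ x := by
  have hex : ∃ m, complexityZ x (m + 1) ≤ complexityZ x m := by
    by_contra hno
    push_neg at hno
    have hmono : ∀ m, m + 1 ≤ complexityZ x m := by
      intro m
      induction m with
      | zero => simp [complexityZ_zero]
      | succ k ih => have := hno k; omega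
    have := hmono n
    omega
  obtain ⟨m, hm⟩ := hex
  have huniq : ∀ i i' : ℤ, subwordZ x i m = subwordZ x i' m → x (i + m) = x (i' + m) := by
    intro i i' he
    by_contra hne
    have hf1 : IsFactorZ x (subwordZ x i m ++ [x (i + m)]) := by
      rw [← subwordZ_snoc]; exact isFactor_subwordZ x i (m + 1)
    have hf2 : IsFactorZ x (subwordZ x i m ++ [x (i' + m)]) := by
      rw [he, ← subwordZ_snoc]; exact isFactor_subwordZ x i' (m + 1)
    have hRS : RightSpecialZ x (subwordZ x i m) := ⟨_, _, hne, hf1, hf2⟩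
    have := complexity_succ_of_right_special (length_subwordZ x i m) hRS
    omega
  -- pigeonhole over windows 0..c
  set c := complexityZ x m with hc
  have hcard : (facSet_finite x m).toFinset.card = c := by
    rw [← Set.ncard_eq_toFinset_card _ (facSet_finite x m)]
    exact (complexityZ_eq_ncard x m).symm
  have hpig : ∃ a ∈ Finset.Icc (0 : ℤ) (c : ℤ), ∃ b ∈ Finset.Icc (0 : ℤ) (c : ℤ),
      a ≠ b ∧ subwordZ x a m = subwordZ x b m := by
    apply Finset.exists_ne_map_eq_of_card_lt_of_maps_to
    · rw [hcard, Int.card_Icc]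
      omega
    · intro i _
      rw [Finset.mem_coe, Set.Finite.mem_toFinset]
      exact subwordZ_mem_facSet x i m
  obtain ⟨a, -, b, -, hab, heq⟩ := hpig
  have main : ∀ (a b : ℤ), a < b → subwordZ x a m = subwordZ x b m →
      PositivelyPeriodicZ x := by
    intro a b hlt heq
    set d := b - a with hd
    have hd1 : 1 ≤ d := by omega
    have step : ∀ i i' : ℤ, subwordZ x i m = subwordZ x i' m →
        subwordZ x (i + 1) m = subwordZ x (i' + 1) m := by
      intro i i' he
      have hlast := huniq i i' he
      rw [subwordZ_eq_iff] at he ⊢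
      intro j hj
      rcases Nat.lt_or_ge (j + 1) m with h1 | h1
      · have h2 := he (j + 1) h1
        have e1 : i + (((j + 1) : ℕ) : ℤ) = i + 1 + j := by push_cast; ring
        have e2 : i' + (((j + 1) : ℕ) : ℤ) = i' + 1 + j := by push_cast; ring
        rwa [e1, e2] at h2
      · have e1 : i + 1 + (j : ℤ) = i + m := by omega
        have e2 : i' + 1 + (j : ℤ) = i' + m := by omega
        rw [e1, e2]
        exact hlast
    have ind : ∀ s : ℕ, subwordZ x (a + s) m = subwordZ x (a + s + d) m := by
      intro s
      induction s with
      | zero =>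
          have e2 : a + ((0 : ℕ) : ℤ) + d = b := by push_cast; omega
          rw [e2]
          have e1 : a + ((0 : ℕ) : ℤ) = a := by simp
          rw [e1]
          exact heq
      | succ k ih =>
          have e2 : a + (((k + 1) : ℕ) : ℤ) + d = a + (k : ℤ) + d + 1 := by push_cast; ring
          rw [e2]
          have e1 : a + (((k + 1) : ℕ) : ℤ) = a + (k : ℤ) + 1 := by push_cast; ring
          rw [e1]
          exact step _ _ ih
    have hper : ∀ s : ℕ, x (a + s + m) = x (a + s + d + m) := by
      intro s
      have := huniq _ _ (ind s)
      have e : a + (s : ℤ) + d + (m : ℤ) = a + s + d + m := by ring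
      rwa [e] at this
    refine ⟨a + m, d.toNat, by omega, ?_⟩
    intro t ht
    obtain ⟨s, rfl⟩ : ∃ s : ℕ, t = a + s + m := ⟨(t - a - m).toNat, by omega⟩
    have h2 := hper s
    have e : a + (s : ℤ) + d + m = a + s + m + (d.toNat : ℤ) := by omega
    rwa [e] at h2
  rcases lt_or_gt_of_ne hab with h | h
  · exact Or.inl (main a b h heq)
  · exact Or.inl (main b a h heq.symm)

lemma complexity_ge_of_aperiodic {x : ℤ → Fin 2} (hx : AperiodicZ x) (n : ℕ) :
    n + 1 ≤ complexityZ x n := by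
  by_contra h
  exact hx (eventuallyPeriodic_of_low_complexity (n := n) (by omega))

end SpanOne
namespace SpanOne

lemma shiftZ_apply (x : ℤ → Fin 2) (k i : ℤ) : shiftZ k x i = x (i + k) := rfl

lemma subwordZ_shiftZ (x : ℤ → Fin 2) (k i : ℤ) (n : ℕ) :
    subwordZ (shiftZ k x) i n = subwordZ x (i + k) n := by
  apply List.ext_getElem (by simp)
  intro j h1 h2
  rw [getElem_subwordZ _ (by simpa using h1), getElem_subwordZ _ (by simpa using h1)]
  show x (i + j + k) = x (i + k + j)
  congr 1
  ring

lemma occursAt_shiftZ {x : ℤ → Fin 2} {k : ℤ} {w : List (Fin 2)} {i : ℤ} :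
    occursAt (shiftZ k x) w i ↔ occursAt x w (i + k) := by
  rw [occursAt, occursAt, subwordZ_shiftZ]

lemma isFactorZ_shiftZ {x : ℤ → Fin 2} {k : ℤ} {w : List (Fin 2)} :
    IsFactorZ (shiftZ k x) w ↔ IsFactorZ x w := by
  constructor
  · rintro ⟨i, h⟩
    exact ⟨i + k, occursAt_shiftZ.mp h⟩
  · rintro ⟨i, h⟩
    refine ⟨i - k, ?_⟩
    rw [occursAt_shiftZ]
    have e : i - k + k = i := by ring
    rwa [e]

lemma shiftZ_shiftZ (x : ℤ → Fin 2) (k k' : ℤ) :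
    shiftZ k' (shiftZ k x) = shiftZ (k + k') x := by
  funext i
  show x (i + k' + k) = x (i + (k + k'))
  congr 1
  ring

lemma shiftZ_zero (x : ℤ → Fin 2) : shiftZ 0 x = x := by
  funext i
  show x (i + 0) = x i
  congr 1
  ring

lemma positivelyPeriodicZ_shiftZ {x : ℤ → Fin 2} {k : ℤ} :
    PositivelyPeriodicZ (shiftZ k x) ↔ PositivelyPeriodicZ x := by
  constructor
  · rintro ⟨N, p, hp, h⟩
    refine ⟨N + k, p, hp, fun t ht => ?_⟩
    have h2 := h (t - k) (by omega)
    rw [shiftZ_apply, shiftZ_apply] at h2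
    have e1 : t - k + k = t := by ring
    have e2 : t - k + p + k = t + p := by ring
    rwa [e1, e2] at h2
  · rintro ⟨N, p, hp, h⟩
    refine ⟨N - k, p, hp, fun t ht => ?_⟩
    rw [shiftZ_apply, shiftZ_apply]
    have h2 := h (t + k) (by omega)
    have e : t + p + k = t + k + p := by ring
    rwa [e]

lemma negativelyPeriodicZ_shiftZ {x : ℤ → Fin 2} {k : ℤ} :
    NegativelyPeriodicZ (shiftZ k x) ↔ NegativelyPeriodicZ x := by
  constructor
  · rintro ⟨N, p, hp, h⟩
    refine ⟨N + k, p, hp, fun t ht => ?_⟩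
    have h2 := h (t - k) (by omega)
    rw [shiftZ_apply, shiftZ_apply] at h2
    have e1 : t - k + k = t := by ring
    have e2 : t - k - p + k = t - p := by ring
    rwa [e1, e2] at h2
  · rintro ⟨N, p, hp, h⟩
    refine ⟨N - k, p, hp, fun t ht => ?_⟩
    rw [shiftZ_apply, shiftZ_apply]
    have h2 := h (t + k) (by omega)
    have e : t - p + k = t + k - p := by ring
    rwa [e]

lemma aperiodicZ_shiftZ {x : ℤ → Fin 2} {k : ℤ} :
    AperiodicZ (shiftZ k x) ↔ AperiodicZ x := by
  unfold AperiodicZ EventuallyPeriodicZ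
  rw [positivelyPeriodicZ_shiftZ, negativelyPeriodicZ_shiftZ]

lemma isAttractorZ_shiftZ {x : ℤ → Fin 2} {Γ : Set ℤ} {k : ℤ}
    (h : IsAttractorZ x Γ) : IsAttractorZ (shiftZ k x) {q | q + k ∈ Γ} := by
  intro w hw hf
  obtain ⟨i, hocc, p, hp, h1, h2⟩ := h w hw (isFactorZ_shiftZ.mp hf)
  refine ⟨i - k, ?_, p - k, ?_, by omega, by omega⟩
  · rw [occursAt_shiftZ]
    have e : i - k + k = i := by ring
    rwa [e]
  · show p - k + k ∈ Γ
    have e : p - k + k = p := by ring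
    rwa [e]

lemma setSpan_preimage_le (Γ : Set ℤ) (k : ℤ) :
    setSpan {q | q + k ∈ Γ} ≤ setSpan Γ := by
  apply iSup₂_le
  intro a ha
  apply iSup₂_le
  intro b hb
  have e : b - a = (b + k) - (a + k) := by ring
  rw [e]
  calc (((b + k) - (a + k)).toNat : ℕ∞)
      ≤ ⨆ c ∈ Γ, (((c : ℤ) - (a + k)).toNat : ℕ∞) :=
        le_biSup (fun c => (((c : ℤ) - (a + k)).toNat : ℕ∞)) hb
    _ ≤ setSpan Γ :=
        le_biSup (fun a' => ⨆ b' ∈ Γ, (((b' : ℤ) - a').toNat : ℕ∞)) ha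

lemma setSpan_preimage_eq (Γ : Set ℤ) (k : ℤ) :
    setSpan {q | q + k ∈ Γ} = setSpan Γ := by
  apply le_antisymm (setSpan_preimage_le Γ k)
  have h := setSpan_preimage_le {q | q + k ∈ Γ} (-k)
  have e : {q | q + -k ∈ {q | q + k ∈ Γ}} = Γ := by
    ext q
    simp only [Set.mem_setOf_eq]
    have e2 : q + -k + k = q := by ring
    rw [e2]
  rwa [e] at h

lemma wordSpan_le_of_attractor {x : ℤ → Fin 2} {Γ : Set ℤ} (h : IsAttractorZ x Γ) :
    wordSpan x ≤ setSpan Γ :=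
  iInf₂_le Γ h

lemma wordSpan_shiftZ_le (x : ℤ → Fin 2) (k : ℤ) :
    wordSpan (shiftZ k x) ≤ wordSpan x := by
  apply le_iInf₂
  intro Γ hΓ
  calc wordSpan (shiftZ k x) ≤ setSpan {q | q + k ∈ Γ} :=
        wordSpan_le_of_attractor (isAttractorZ_shiftZ hΓ)
    _ = setSpan Γ := setSpan_preimage_eq Γ k

lemma wordSpan_shiftZ (x : ℤ → Fin 2) (k : ℤ) :
    wordSpan (shiftZ k x) = wordSpan x := by
  apply le_antisymm (wordSpan_shiftZ_le x k)
  have h := wordSpan_shiftZ_le (shiftZ k x) (-k)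
  rwa [shiftZ_shiftZ, show k + -k = 0 by ring, shiftZ_zero] at h

lemma isAttractorZ_mono {x : ℤ → Fin 2} {Γ Γ' : Set ℤ}
    (h : IsAttractorZ x Γ) (hsub : Γ ⊆ Γ') : IsAttractorZ x Γ' := by
  intro w hw hf
  obtain ⟨i, hocc, p, hp, h1, h2⟩ := h w hw hf
  exact ⟨i, hocc, p, hsub hp, h1, h2⟩

lemma attractor_nonempty {x : ℤ → Fin 2} {Γ : Set ℤ} (h : IsAttractorZ x Γ) :
    Γ.Nonempty := by
  obtain ⟨i, -, p, hp, -⟩ := h [x 0] (by simp)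
    ⟨0, by rw [occursAt, List.length_singleton, subwordZ_one]⟩
  exact ⟨p, hp⟩

lemma pair_diff_le_of_setSpan_le {Γ : Set ℤ} {m : ℕ} (h : setSpan Γ ≤ m)
    {b c : ℤ} (hb : b ∈ Γ) (hc : c ∈ Γ) : c - b ≤ m := by
  have h1 : (((c - b).toNat : ℕ) : ℕ∞) ≤ setSpan Γ :=
    calc (((c - b).toNat : ℕ) : ℕ∞) ≤ ⨆ d ∈ Γ, (((d : ℤ) - b).toNat : ℕ∞) :=
          le_biSup (fun d => (((d : ℤ) - b).toNat : ℕ∞)) hc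
      _ ≤ setSpan Γ :=
          le_biSup (fun b' => ⨆ d ∈ Γ, (((d : ℤ) - b').toNat : ℕ∞)) hb
  have h2 : (((c - b).toNat : ℕ) : ℕ∞) ≤ (m : ℕ∞) := h1.trans h
  have h3 : (c - b).toNat ≤ m := by exact_mod_cast h2
  omega

lemma one_le_setSpan_of_aperiodic {x : ℤ → Fin 2} {Γ : Set ℤ}
    (hx : AperiodicZ x) (hΓ : IsAttractorZ x Γ) : 1 ≤ setSpan Γ := by
  by_contra h
  push_neg at h
  have h0 : setSpan Γ ≤ 0 := (ENat.lt_one_iff_eq_zero.mp h).le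
  obtain ⟨p, hp⟩ := attractor_nonempty hΓ
  have hsingle : ∀ q ∈ Γ, q = p := by
    intro q hq
    have h1 := pair_diff_le_of_setSpan_le (m := 0) (by exact_mod_cast h0) hp hq
    have h2 := pair_diff_le_of_setSpan_le (m := 0) (by exact_mod_cast h0) hq hp
    omega
  have hletter : ∀ a : Fin 2, IsFactorZ x [a] → a = x p := by
    intro a hf
    obtain ⟨i, hocc, q, hq, hl1, hl2⟩ := hΓ [a] (by simp) hf
    rw [occursAt, List.length_singleton, subwordZ_one] at hocc
    have ha : a = x i := by
      injection hocc with h1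
      exact h1.symm
    have hiq : i = q := by
      simp only [List.length_singleton] at hl2
      omega
    rw [ha, hiq, hsingle q hq]
  have hsub : facSet x 1 ⊆ {[x p]} := by
    rintro w ⟨hl, hf⟩
    obtain ⟨a, rfl⟩ := List.length_eq_one_iff.mp hl
    rw [hletter a hf]
    rfl
  have hc1 : complexityZ x 1 ≤ 1 := by
    rw [complexityZ_eq_ncard]
    calc (facSet x 1).ncard ≤ ({[x p]} : Set (List (Fin 2))).ncard :=
          Set.ncard_le_ncard hsub (Set.finite_singleton _)
      _ = 1 := Set.ncard_singleton _
  exact hx (eventuallyPeriodic_of_low_complexity hc1)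

lemma setSpan_pair_le_one (p : ℤ) : setSpan {p, p + 1} ≤ 1 := by
  apply iSup₂_le
  intro a ha
  apply iSup₂_le
  intro b hb
  have h1 : (b - a).toNat ≤ 1 := by
    rcases ha with rfl | ha
    · rcases hb with rfl | hb
      · omega
      · rw [Set.mem_singleton_iff] at hb
        omega
    · rw [Set.mem_singleton_iff] at ha
      rcases hb with rfl | hb
      · omega
      · rw [Set.mem_singleton_iff] at hb
        omega
  exact_mod_cast h1

lemma wordSpan_eq_one_of_pair {x : ℤ → Fin 2} (hx : AperiodicZ x) {p : ℤ}
    (hΓ : IsAttractorZ x {p, p + 1}) : wordSpan x = 1 := by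
  apply le_antisymm
  · exact (wordSpan_le_of_attractor hΓ).trans (setSpan_pair_le_one p)
  · exact le_iInf₂ fun Γ hΓ' => one_le_setSpan_of_aperiodic hx hΓ'

lemma exists_attractor_pair {x : ℤ → Fin 2} (h : wordSpan x = 1) :
    ∃ p : ℤ, IsAttractorZ x {p, p + 1} := by
  have h1 : ∃ Γ, IsAttractorZ x Γ ∧ setSpan Γ ≤ 1 := by
    by_contra hno
    push_neg at hno
    have h2 : (2 : ℕ∞) ≤ wordSpan x := by
      apply le_iInf₂
      intro Γ hΓ
      have h3 : (1 : ℕ∞) < setSpan Γ := hno Γ hΓ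
      exact Order.add_one_le_of_lt h3
    rw [h] at h2
    norm_num at h2
  obtain ⟨Γ, hΓ, hle⟩ := h1
  obtain ⟨a, ha⟩ := attractor_nonempty hΓ
  have hbound : ∀ b ∈ Γ, ∀ c ∈ Γ, c - b ≤ 1 := fun b hb c hc =>
    pair_diff_le_of_setSpan_le (m := 1) (by exact_mod_cast hle) hb hc
  by_cases hc : a + 1 ∈ Γ
  · refine ⟨a, isAttractorZ_mono hΓ ?_⟩
    intro b hb
    have h1 := hbound a ha b hb
    have h2 := hbound b hb (a + 1) hc
    simp only [Set.mem_insert_iff, Set.mem_singleton_iff]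
    omega
  · refine ⟨a - 1, isAttractorZ_mono hΓ ?_⟩
    intro b hb
    have h1 := hbound a ha b hb
    have h2 := hbound b hb a ha
    have hne : b ≠ a + 1 := fun hba => hc (hba ▸ hb)
    simp only [Set.mem_insert_iff, Set.mem_singleton_iff]
    omega

end SpanOne
namespace SpanOne

lemma chain_period_aux {f : ℤ → Fin 2} {g : ℕ} {lo hi : ℤ}
    (hper : ∀ t : ℤ, lo ≤ t → t + (g : ℤ) ≤ hi → f t = f (t + (g : ℤ))) :
    ∀ m : ℕ, ∀ s : ℤ, lo ≤ s → s + (m : ℤ) * (g : ℤ) ≤ hi →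
      f s = f (s + (m : ℤ) * (g : ℤ)) := by
  intro m
  induction m with
  | zero =>
      intro s _ _
      have e : s + ((0 : ℕ) : ℤ) * (g : ℤ) = s := by push_cast; ring
      rw [e]
  | succ k ih =>
      intro s hs hsm
      have hg0 : (0 : ℤ) ≤ (g : ℤ) := by positivity
      have hk0 : (0 : ℤ) ≤ (k : ℤ) * (g : ℤ) := by positivity
      have e : s + ((k + 1 : ℕ) : ℤ) * (g : ℤ) = (s + (g : ℤ)) + (k : ℤ) * (g : ℤ) := by
        push_cast; ring
      have hsm' : (s + (g : ℤ)) + (k : ℤ) * (g : ℤ) ≤ hi := by rw [← e]; exact hsm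
      have h1 : f s = f (s + (g : ℤ)) := hper s hs (by linarith)
      have h2 : f (s + (g : ℤ)) = f ((s + (g : ℤ)) + (k : ℤ) * (g : ℤ)) :=
        ih (s + (g : ℤ)) (by linarith) hsm'
      rw [e, h1, h2]

lemma chain_period {f : ℤ → Fin 2} {g : ℕ} {lo hi s u : ℤ} (hg : 0 < g)
    (hper : ∀ t : ℤ, lo ≤ t → t + (g : ℤ) ≤ hi → f t = f (t + (g : ℤ)))
    (hs : lo ≤ s) (hs' : s ≤ hi) (hu : lo ≤ u) (hu' : u ≤ hi)
    (hdvd : (g : ℤ) ∣ (u - s)) : f s = f u := by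
  have hg0 : (0 : ℤ) < (g : ℤ) := by exact_mod_cast hg
  have key : ∀ v w : ℤ, lo ≤ v → w ≤ hi → v ≤ w → (g : ℤ) ∣ (w - v) → f v = f w := by
    intro v w hv hw hvw hd
    obtain ⟨m, hm⟩ := hd
    have hm0 : 0 ≤ m := by
      by_contra hneg
      push_neg at hneg
      have h1 : (g : ℤ) * m ≤ (g : ℤ) * (-1) :=
        mul_le_mul_of_nonneg_left (by omega) (by linarith)
      linarith
    lift m to ℕ using hm0 with mn
    have he : w = v + (mn : ℤ) * (g : ℤ) := by
      have hcomm : (g : ℤ) * (mn : ℤ) = (mn : ℤ) * (g : ℤ) := mul_comm _ _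
      linarith
    rw [he]
    exact chain_period_aux hper mn v hv (by rw [← he]; exact hw)
  rcases le_total s u with hle | hle
  · exact key s u hs hu' hle hdvd
  · refine (key u s hu hs' hle ?_).symm
    have e : s - u = -(u - s) := by ring
    rw [e]
    exact dvd_neg.mpr hdvd

lemma fine_wilf_aux {f : ℤ → Fin 2} :
    ∀ N p q : ℕ, p + q ≤ N → 0 < q → q ≤ p → ∀ a b : ℤ,
    (∀ t : ℤ, a ≤ t → t + (p : ℤ) ≤ b → f t = f (t + (p : ℤ))) →
    (∀ t : ℤ, a ≤ t → t + (q : ℤ) ≤ b → f t = f (t + (q : ℤ))) →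
    ((p : ℤ) + (q : ℤ) - (Nat.gcd p q : ℤ) ≤ b - a + 1) →
    ∀ t : ℤ, a ≤ t → t + (Nat.gcd p q : ℤ) ≤ b →
      f t = f (t + (Nat.gcd p q : ℤ)) := by
  intro N
  induction N with
  | zero =>
      intro p q hN hq _
      exact absurd hN (by omega)
  | succ N ih =>
      intro p q hN hq hqp a b hp hq' hlen t ht htb
      have hgp : Nat.gcd p q ∣ p := Nat.gcd_dvd_left p q
      have hgq : Nat.gcd p q ∣ q := Nat.gcd_dvd_right p q
      have hg : 0 < Nat.gcd p q := Nat.gcd_pos_of_pos_right p hq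
      set g := Nat.gcd p q with hgdef
      by_cases hgeq : g = q
      · rw [hgeq]
        exact hq' t ht (by rwa [hgeq] at htb)
      · have hgltq : g < q := lt_of_le_of_ne (Nat.le_of_dvd hq hgq) hgeq
        have hqltp : q < p := by
          rcases lt_or_eq_of_le hqp with h | h
          · exact h
          · exact absurd (by rw [hgdef, h, Nat.gcd_self]) hgeq
        have hgdvd_pq : g ∣ p - q := Nat.dvd_sub hgp hgq
        have hpgap : p = q + g ∨ q + 2 * g ≤ p := by
          obtain ⟨c, hc⟩ := hgdvd_pq
          rcases c with _ | _ | c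
          · simp at hc; omega
          · left; simp at hc; omega
          · right
            have h2 : g * 2 ≤ g * (c + 1 + 1) := Nat.mul_le_mul_left g (by omega)
            omega
        have hgZ : (0 : ℤ) < (g : ℤ) := by exact_mod_cast hg
        rcases hpgap with hpA | hpB
        · -- case A : p = q + g
          have e1 : (p : ℤ) = (q : ℤ) + (g : ℤ) := by exact_mod_cast hpA
          have hlen2 : 2 * (q : ℤ) ≤ b - a + 1 := by linarith
          have hleft : ∀ s : ℤ, a ≤ s → s + (g : ℤ) + (q : ℤ) ≤ b →
              f s = f (s + (g : ℤ)) := by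
            intro s hs hsb
            have h1 : f s = f (s + (p : ℤ)) := hp s hs (by linarith)
            have h2 : f (s + (g : ℤ)) = f (s + (g : ℤ) + (q : ℤ)) :=
              hq' (s + (g : ℤ)) (by linarith) (by linarith)
            have e2 : s + (g : ℤ) + (q : ℤ) = s + (p : ℤ) := by rw [e1]; ring
            calc f s = f (s + (p : ℤ)) := h1
              _ = f (s + (g : ℤ) + (q : ℤ)) := by rw [e2]
              _ = f (s + (g : ℤ)) := h2.symm
          have hright : ∀ s : ℤ, a + (q : ℤ) ≤ s → s + (g : ℤ) ≤ b →
              f s = f (s + (g : ℤ)) := by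
            intro s hs hsb
            have h1 : f (s - (q : ℤ)) = f (s - (q : ℤ) + (q : ℤ)) :=
              hq' (s - (q : ℤ)) (by linarith) (by linarith)
            have h2 : f (s - (q : ℤ)) = f (s - (q : ℤ) + (p : ℤ)) :=
              hp (s - (q : ℤ)) (by linarith) (by rw [e1]; linarith)
            have e2 : s - (q : ℤ) + (q : ℤ) = s := by ring
            have e3 : s - (q : ℤ) + (p : ℤ) = s + (g : ℤ) := by rw [e1]; ring
            rw [e2] at h1
            rw [e3] at h2
            exact h1.symm.trans h2
          by_cases hc1 : t + (q : ℤ) + (g : ℤ) ≤ b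
          · exact hleft t ht (by linarith)
          · by_cases hc2 : a + (q : ℤ) ≤ t
            · exact hright t hc2 htb
            · push_neg at hc1 hc2
              have hq_le : t + (q : ℤ) ≤ b := by linarith
              have h1 : f t = f (t + (q : ℤ)) := hq' t ht hq_le
              have h2 : f (t + (g : ℤ)) = f (t + (q : ℤ)) := by
                refine chain_period hg hright ?_ ?_ ?_ ?_ ?_
                · linarith
                · exact htb
                · linarith
                · exact hq_le
                · have e4 : t + (q : ℤ) - (t + (g : ℤ)) = (q : ℤ) - (g : ℤ) := by ring
                  rw [e4]
                  exact dvd_sub (Int.natCast_dvd_natCast.mpr hgq) dvd_rfl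
              rw [h1, ← h2]
        · -- case B : q + 2g ≤ p
          set p' := p - q with hp'def
          have hp'pos : 0 < p' := by omega
          have hcastp' : (p' : ℤ) = (p : ℤ) - (q : ℤ) := by
            rw [hp'def]
            exact Nat.cast_sub hqp
          have hgcd' : Nat.gcd p' q = g := by
            rw [hp'def, hgdef]
            exact Nat.gcd_sub_self_left hqp
          have hpBZ : (q : ℤ) + 2 * (g : ℤ) ≤ (p : ℤ) := by exact_mod_cast hpB
          -- left interval [a, b - q]
          have hpL : ∀ s : ℤ, a ≤ s → s + (p' : ℤ) ≤ b - q → f s = f (s + (p' : ℤ)) := by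
            intro s hs hsb
            have h1 : f s = f (s + (p : ℤ)) := hp s hs (by linarith [hcastp'])
            have h2 : f (s + (p' : ℤ)) = f (s + (p' : ℤ) + (q : ℤ)) :=
              hq' (s + (p' : ℤ)) (by linarith [hcastp', hpBZ, hgZ]) (by linarith)
            have e : s + (p : ℤ) = s + (p' : ℤ) + (q : ℤ) := by rw [hcastp']; ring
            calc f s = f (s + (p : ℤ)) := h1
              _ = f (s + (p' : ℤ) + (q : ℤ)) := by rw [e]
              _ = f (s + (p' : ℤ)) := h2.symm
          have hqL : ∀ s : ℤ, a ≤ s → s + (q : ℤ) ≤ b - q → f s = f (s + (q : ℤ)) :=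
            fun s hs hsb => hq' s hs (by linarith)
          have hlenL : (p' : ℤ) + (q : ℤ) - (Nat.gcd p' q : ℤ) ≤ (b - q) - a + 1 := by
            rw [hgcd']
            linarith [hcastp']
          have hsumL : p' + q ≤ N := by omega
          have hLg : ∀ s : ℤ, a ≤ s → s + (g : ℤ) ≤ b - q → f s = f (s + (g : ℤ)) := by
            rcases le_total q p' with hle | hle
            · have h := ih p' q hsumL hq hle a (b - q) hpL hqL hlenL
              rwa [hgcd'] at h
            · have hlenL' : (q : ℤ) + (p' : ℤ) - (Nat.gcd q p' : ℤ) ≤ (b - q) - a + 1 := by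
                rw [Nat.gcd_comm q p', hgcd']
                linarith [hcastp']
              have h := ih q p' (by omega) hp'pos hle a (b - q) hqL hpL hlenL'
              rwa [Nat.gcd_comm q p', hgcd'] at h
          -- right interval [a + q, b]
          have hpR : ∀ s : ℤ, a + (q : ℤ) ≤ s → s + (p' : ℤ) ≤ b → f s = f (s + (p' : ℤ)) := by
            intro s hs hsb
            have h1 : f (s - (q : ℤ)) = f (s - (q : ℤ) + (q : ℤ)) :=
              hq' (s - (q : ℤ)) (by linarith) (by linarith [hcastp', hpBZ, hgZ])
            have h2 : f (s - (q : ℤ)) = f (s - (q : ℤ) + (p : ℤ)) :=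
              hp (s - (q : ℤ)) (by linarith) (by linarith [hcastp'])
            have e2 : s - (q : ℤ) + (q : ℤ) = s := by ring
            have e3 : s - (q : ℤ) + (p : ℤ) = s + (p' : ℤ) := by rw [hcastp']; ring
            rw [e2] at h1
            rw [e3] at h2
            exact h1.symm.trans h2
          have hqR : ∀ s : ℤ, a + (q : ℤ) ≤ s → s + (q : ℤ) ≤ b → f s = f (s + (q : ℤ)) :=
            fun s hs hsb => hq' s (by linarith) hsb
          have hlenR : (p' : ℤ) + (q : ℤ) - (Nat.gcd p' q : ℤ) ≤ b - (a + q) + 1 := by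
            rw [hgcd']
            linarith [hcastp']
          have hRg : ∀ s : ℤ, a + (q : ℤ) ≤ s → s + (g : ℤ) ≤ b → f s = f (s + (g : ℤ)) := by
            rcases le_total q p' with hle | hle
            · have h := ih p' q hsumL hq hle (a + q) b hpR hqR hlenR
              rwa [hgcd'] at h
            · have hlenR' : (q : ℤ) + (p' : ℤ) - (Nat.gcd q p' : ℤ) ≤ b - (a + q) + 1 := by
                rw [Nat.gcd_comm q p', hgcd']
                linarith [hcastp']
              have h := ih q p' (by omega) hp'pos hle (a + q) b hqR hpR hlenR'
              rwa [Nat.gcd_comm q p', hgcd'] at h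
          by_cases hc : t + (g : ℤ) ≤ b - q
          · exact hLg t ht hc
          · push_neg at hc
            have hta : a + (q : ℤ) ≤ t := by linarith
            exact hRg t hta htb

lemma fine_wilf {f : ℤ → Fin 2} {p q : ℕ} (hp0 : 0 < p) (hq0 : 0 < q) {a b : ℤ}
    (hp : ∀ t : ℤ, a ≤ t → t + (p : ℤ) ≤ b → f t = f (t + (p : ℤ)))
    (hq : ∀ t : ℤ, a ≤ t → t + (q : ℤ) ≤ b → f t = f (t + (q : ℤ)))
    (hlen : (p : ℤ) + (q : ℤ) - (Nat.gcd p q : ℤ) ≤ b - a + 1) :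
    ∀ t : ℤ, a ≤ t → t + (Nat.gcd p q : ℤ) ≤ b → f t = f (t + (Nat.gcd p q : ℤ)) := by
  rcases le_total q p with h | h
  · exact fine_wilf_aux (p + q) p q le_rfl hq0 h a b hp hq hlen
  · intro t ht htb
    have hlen' : (q : ℤ) + (p : ℤ) - (Nat.gcd q p : ℤ) ≤ b - a + 1 := by
      rw [Nat.gcd_comm q p]
      linarith
    have h2 := fine_wilf_aux (q + p) q p le_rfl hp0 h a b hq hp hlen' t ht
      (by rw [Nat.gcd_comm q p]; exact htb)
    rwa [Nat.gcd_comm q p] at h2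

end SpanOne
namespace SpanOne

lemma subwordZ_congr_index (x : ℤ → Fin 2) {i i' : ℤ} (n : ℕ) (h : i = i') :
    subwordZ x i n = subwordZ x i' n := by rw [h]

lemma subwordZ_cons' (x : ℤ → Fin 2) {i i' : ℤ} (n : ℕ) (h : i' = i + 1) :
    subwordZ x i (n + 1) = x i :: subwordZ x i' n := by rw [subwordZ_cons, h]

lemma crux {y : ℤ → Fin 2} (hap : AperiodicZ y)
    (hc : ∀ m : ℕ, complexityZ y m = m + 1)
    (hRS : ∀ m : ℕ, RightSpecialZ y (subwordZ y (-(m : ℤ)) m))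
    (hLS : ∀ m : ℕ, LeftSpecialZ y (subwordZ y 2 m))
    (n : ℕ)
    (hE : ∀ t : ℤ, -(n : ℤ) ≤ t → t ≤ 0 → y t = y (t + (n : ℤ) + 1)) :
    False := by
  have hnotpos : ¬ PositivelyPeriodicZ y := fun h => hap (Or.inl h)
  have hnotneg : ¬ NegativelyPeriodicZ y := fun h => hap (Or.inr h)
  set P : ℤ := (n : ℤ) + 1 with hPdef
  have hE' : ∀ t : ℤ, 1 - P ≤ t → t ≤ 0 → y t = y (t + P) := by
    intro t h1 h2
    have := hE t (by omega) h2
    rwa [show t + (n : ℤ) + 1 = t + P by omega] at this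
  -- right break
  have hex_r : ∃ m : ℕ, y (1 + (m : ℤ)) ≠ y (1 + (m : ℤ) + P) := by
    by_contra hno
    push_neg at hno
    refine hnotpos ⟨1 - P, n + 1, by omega, fun t ht => ?_⟩
    rw [show t + ((n + 1 : ℕ) : ℤ) = t + P by push_cast; omega]
    rcases le_or_gt t 0 with h | h
    · exact hE' t ht h
    · have h2 := hno (t - 1).toNat
      rwa [show 1 + ((t - 1).toNat : ℤ) = t by omega] at h2
  set m₀ := Nat.find hex_r with hm₀def
  set k : ℕ := m₀ + 1 with hkdef
  have hbreak_r : y (k : ℤ) ≠ y ((k : ℤ) + P) := by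
    have h := Nat.find_spec hex_r
    rwa [show 1 + (m₀ : ℤ) = (k : ℤ) by push_cast; omega] at h
  have hAright : ∀ t : ℤ, 1 - P ≤ t → t ≤ (k : ℤ) - 1 → y t = y (t + P) := by
    intro t h1 h2
    rcases le_or_gt t 0 with h | h
    · exact hE' t h1 h
    · have hlt : (t - 1).toNat < m₀ := by omega
      have h3 := Nat.find_min hex_r hlt
      rw [not_ne_iff] at h3
      rwa [show 1 + ((t - 1).toNat : ℤ) = t by omega] at h3
  -- left break
  have hex_l : ∃ m : ℕ, y (-(m : ℤ) - P) ≠ y (-(m : ℤ)) := by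
    by_contra hno
    push_neg at hno
    refine hnotneg ⟨0, n + 1, by omega, fun t ht => ?_⟩
    rw [show t - ((n + 1 : ℕ) : ℤ) = t - P by push_cast; omega]
    have h2 := hno (-t).toNat
    rw [show -((-t).toNat : ℤ) = t by omega] at h2
    exact h2.symm
  set m₁ := Nat.find hex_l with hm₁def
  set J : ℤ := (m₁ : ℤ) with hJdef
  have hbreak_l : y (-J - P) ≠ y (-J) := Nat.find_spec hex_l
  have hAleft : ∀ m : ℕ, m < m₁ → y (-(m : ℤ) - P) = y (-(m : ℤ)) := by
    intro m hm
    have h3 := Nat.find_min hex_l hm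
    rwa [not_ne_iff] at h3
  -- full periodicity region
  have hA : ∀ t : ℤ, 1 - P - J ≤ t → t ≤ (k : ℤ) - 1 → y t = y (t + P) := by
    intro t h1 h2
    rcases le_or_gt (1 - P) t with h | h
    · exact hAright t h h2
    · have hm : ((-t - P).toNat : ℤ) = -t - P := by omega
      have hlt : (-t - P).toNat < m₁ := by omega
      have h3 := hAleft _ hlt
      rw [show -(((-t - P).toNat : ℤ)) - P = t by omega,
        show -(((-t - P).toNat : ℤ)) = t + P by omega] at h3
      exact h3
  -- the right-special word v
  have hk1 : 1 ≤ k := by omega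
  set m1 : ℕ := n + k with hm1def
  have hm1c : (m1 : ℤ) = (n : ℤ) + (k : ℤ) := by push_cast; omega
  have hocc2 : subwordZ y 1 m1 = subwordZ y (1 - P) m1 := by
    rw [subwordZ_eq_iff]
    intro s hs
    have hsc : (s : ℤ) < (m1 : ℤ) := by exact_mod_cast hs
    have h1 := hA (1 - P + s) (by omega) (by omega)
    rw [show 1 - P + (s : ℤ) + P = 1 + s by ring] at h1
    exact h1.symm
  have hv_rs : RightSpecialZ y (subwordZ y (1 - P) m1) := by
    refine ⟨y (1 - P + (m1 : ℤ)), y (1 + (m1 : ℤ)), ?_, ?_, ?_⟩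
    · rw [show 1 - P + (m1 : ℤ) = (k : ℤ) by omega,
        show 1 + (m1 : ℤ) = (k : ℤ) + P by omega]
      exact hbreak_r
    · rw [← subwordZ_snoc]
      exact isFactor_subwordZ y (1 - P) (m1 + 1)
    · rw [← hocc2, ← subwordZ_snoc]
      exact isFactor_subwordZ y 1 (m1 + 1)
  have huniq_v : subwordZ y (1 - P) m1 = subwordZ y (-(m1 : ℤ)) m1 :=
    rightSpecial_unique hc (length_subwordZ y (1 - P) m1)
      (length_subwordZ y (-(m1 : ℤ)) m1) hv_rs (hRS m1)
  have hB : ∀ t : ℤ, 1 - P - (k : ℤ) ≤ t → t ≤ -1 → y t = y (t + (k : ℤ)) := by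
    intro t h1 h2
    have hs : ((t + m1).toNat : ℤ) = t + m1 := by omega
    have hslt : (t + m1).toNat < m1 := by omega
    have h3 := subwordZ_eq_iff.mp huniq_v (t + m1).toNat hslt
    rw [show 1 - P + ((t + m1).toNat : ℤ) = t + (k : ℤ) by omega,
      show -(m1 : ℤ) + ((t + m1).toNat : ℤ) = t by omega] at h3
    exact h3.symm
  -- the left-special word w
  set m2 : ℕ := n + k + m₁ with hm2def
  have hm2c : (m2 : ℤ) = (n : ℤ) + (k : ℤ) + (m₁ : ℤ) := by push_cast; omega
  have hocc_w : subwordZ y (1 - J) m2 = subwordZ y (1 - P - J) m2 := by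
    rw [subwordZ_eq_iff]
    intro s hs
    have hsc : (s : ℤ) < (m2 : ℤ) := by exact_mod_cast hs
    have h1 := hA (1 - P - J + s) (by omega) (by omega)
    rw [show 1 - P - J + (s : ℤ) + P = 1 - J + s by ring] at h1
    exact h1.symm
  have hw_ls : LeftSpecialZ y (subwordZ y (1 - P - J) m2) := by
    refine ⟨y (-J - P), y (-J), hbreak_l, ?_, ?_⟩
    · rw [← subwordZ_cons' y m2 (show 1 - P - J = (-J - P) + 1 by ring)]
      exact isFactor_subwordZ y (-J - P) (m2 + 1)
    · rw [← hocc_w, ← subwordZ_cons' y m2 (show 1 - J = (-J) + 1 by ring)]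
      exact isFactor_subwordZ y (-J) (m2 + 1)
  have huniq_w : subwordZ y (1 - P - J) m2 = subwordZ y 2 m2 :=
    leftSpecial_unique hc (length_subwordZ y (1 - P - J) m2)
      (length_subwordZ y 2 m2) hw_ls (hLS m2)
  have hC : ∀ t : ℤ, 1 - P - J ≤ t → t ≤ (k : ℤ) - 1 → y t = y (t + P + J + 1) := by
    intro t h1 h2
    have hs : ((t - (1 - P - J)).toNat : ℤ) = t - (1 - P - J) := by omega
    have hslt : (t - (1 - P - J)).toNat < m2 := by omega
    have h3 := subwordZ_eq_iff.mp huniq_w (t - (1 - P - J)).toNat hslt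
    rw [show 1 - P - J + ((t - (1 - P - J)).toNat : ℤ) = t by omega,
      show (2 : ℤ) + ((t - (1 - P - J)).toNat : ℤ) = t + P + J + 1 by omega] at h3
    exact h3
  have hD : ∀ s : ℤ, 1 - J ≤ s → s ≤ (k : ℤ) + P - 1 → y s = y (s + J + 1) := by
    intro s h1 h2
    have ha1 := hA (s - P) (by omega) (by omega)
    rw [show s - P + P = s by ring] at ha1
    have hc1 := hC (s - P) (by omega) (by omega)
    rw [show s - P + P + J + 1 = s + J + 1 by ring] at hc1
    exact ha1.symm.trans hc1
  -- Fine and Wilf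
  set g : ℕ := Nat.gcd (n + 1) (m₁ + 1) with hgdef
  have hg : 0 < g := Nat.gcd_pos_of_pos_right _ (by omega)
  have hgP : ((g : ℤ)) ∣ ((n : ℤ) + 1) := by
    have := Nat.gcd_dvd_left (n + 1) (m₁ + 1)
    exact_mod_cast Int.natCast_dvd_natCast.mpr this
  have hgJ : ((g : ℤ)) ∣ ((m₁ : ℤ) + 1) := by
    have := Nat.gcd_dvd_right (n + 1) (m₁ + 1)
    exact_mod_cast Int.natCast_dvd_natCast.mpr this
  have hper_p : ∀ t : ℤ, 1 - J ≤ t → t + ((n + 1 : ℕ) : ℤ) ≤ (k : ℤ) + P - 1 →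
      y t = y (t + ((n + 1 : ℕ) : ℤ)) := by
    intro t h1 h2
    have h3 := hA t (by omega) (by omega)
    rwa [show t + P = t + ((n + 1 : ℕ) : ℤ) by push_cast; omega] at h3
  have hper_q : ∀ t : ℤ, 1 - J ≤ t → t + ((m₁ + 1 : ℕ) : ℤ) ≤ (k : ℤ) + P - 1 →
      y t = y (t + ((m₁ + 1 : ℕ) : ℤ)) := by
    intro t h1 h2
    have h3 := hD t h1 (by push_cast at h2 ⊢; omega)
    rwa [show t + J + 1 = t + ((m₁ + 1 : ℕ) : ℤ) by push_cast; omega] at h3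
  have hlen : ((n + 1 : ℕ) : ℤ) + ((m₁ + 1 : ℕ) : ℤ) - (Nat.gcd (n + 1) (m₁ + 1) : ℤ)
      ≤ ((k : ℤ) + P - 1) - (1 - J) + 1 := by
    have hgc : (1 : ℤ) ≤ (g : ℤ) := by exact_mod_cast hg
    rw [← hgdef]
    push_cast
    omega
  have hFW := fine_wilf (f := y) (by omega) (by omega) hper_p hper_q hlen
  rw [← hgdef] at hFW
  -- conclude
  have h_last := hD ((k : ℤ) + P - (J + 1)) (by omega) (by omega)
  rw [show (k : ℤ) + P - (J + 1) + J + 1 = (k : ℤ) + P by ring] at h_last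
  have h_chain : y (k : ℤ) = y ((k : ℤ) + P - (J + 1)) := by
    refine chain_period hg hFW (by omega) (by omega) (by omega) (by omega) ?_
    have e : (k : ℤ) + P - (J + 1) - (k : ℤ) = ((n : ℤ) + 1) - ((m₁ : ℤ) + 1) := by omega
    rw [e]
    exact dvd_sub hgP hgJ
  exact hbreak_r (h_chain.trans h_last)

end SpanOne
namespace SpanOne

lemma subwordZ_center (y : ℤ → Fin 2) (n : ℕ) :
    subwordZ y (-(n : ℤ)) (2 * n + 2) =
      subwordZ y (-(n : ℤ)) n ++ [y 0, y 1] ++ subwordZ y 2 n := by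
  rw [show 2 * n + 2 = n + (2 + n) by omega]
  rw [subwordZ_append y _ n (2 + n)]
  rw [subwordZ_append y _ 2 n]
  have e1 : -(n : ℤ) + n = 0 := by ring
  rw [e1]
  rw [show (0 : ℤ) + ((2 : ℕ) : ℤ) = 2 by simp]
  have e2 : subwordZ y 0 2 = [y 0, y 1] := by
    rw [subwordZ_cons y 0 1, subwordZ_one]
    norm_num
  rw [e2, List.append_assoc]

lemma char_eq_parts {y : ℤ → Fin 2} {n : ℕ} {r l : List (Fin 2)} {c0 c1 : Fin 2}
    (hr : r.length = n) (hl : l.length = n)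
    (he : subwordZ y (-(n : ℤ)) (2 * n + 2) = r ++ [c0, c1] ++ l) :
    r = subwordZ y (-(n : ℤ)) n ∧ y 0 = c0 ∧ y 1 = c1 ∧ l = subwordZ y 2 n := by
  rw [subwordZ_center] at he
  have h1 := List.append_inj he (by simp [hr])
  have h2 := List.append_inj h1.1 (by simp [hr])
  have h3 : y 0 = c0 ∧ y 1 = c1 := by
    have := h2.2
    simp only [List.cons.injEq] at this
    exact ⟨this.1, this.2.1⟩
  exact ⟨h2.1.symm, h3.1, h3.2, h1.2.symm⟩

lemma char_props {y : ℤ → Fin 2} (h : CharacteristicSturmian y) :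
    SturmianZ y ∧ (∀ m : ℕ, RightSpecialZ y (subwordZ y (-(m : ℤ)) m)) ∧
      (∀ m : ℕ, LeftSpecialZ y (subwordZ y 2 m)) ∧ y 0 ≠ y 1 := by
  have main : ∀ c0 c1 : Fin 2, c0 ≠ c1 →
      (∀ m : ℕ, ∃ r l : List (Fin 2),
        r.length = m ∧ RightSpecialZ y r ∧ l.length = m ∧ LeftSpecialZ y l ∧
        subwordZ y (-(m : ℤ)) (2 * m + 2) = r ++ [c0, c1] ++ l) →
      (∀ m : ℕ, RightSpecialZ y (subwordZ y (-(m : ℤ)) m)) ∧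
        (∀ m : ℕ, LeftSpecialZ y (subwordZ y 2 m)) ∧ y 0 ≠ y 1 := by
    intro c0 c1 hne hall
    refine ⟨fun m => ?_, fun m => ?_, ?_⟩
    · obtain ⟨r, l, hr, hRS, hl, hLS, he⟩ := hall m
      obtain ⟨h1, -, -, -⟩ := char_eq_parts hr hl he
      exact h1 ▸ hRS
    · obtain ⟨r, l, hr, hRS, hl, hLS, he⟩ := hall m
      obtain ⟨-, -, -, h4⟩ := char_eq_parts hr hl he
      exact h4 ▸ hLS
    · obtain ⟨r, l, hr, hRS, hl, hLS, he⟩ := hall 0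
      obtain ⟨-, h2, h3, -⟩ := char_eq_parts hr hl he
      rw [h2, h3]
      exact hne
  rcases h with ⟨hS, hall⟩ | ⟨hS, hall⟩
  · exact ⟨hS, main 0 1 (by decide) hall⟩
  · exact ⟨hS, main 1 0 (by decide) hall⟩

lemma windows_inj {y : ℤ → Fin 2} (hap : AperiodicZ y)
    (hc : ∀ m : ℕ, complexityZ y m = m + 1)
    (hRS : ∀ m : ℕ, RightSpecialZ y (subwordZ y (-(m : ℤ)) m))
    (hLS : ∀ m : ℕ, LeftSpecialZ y (subwordZ y 2 m))
    (h01 : y 0 ≠ y 1) :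
    ∀ n : ℕ, 1 ≤ n → ∀ i1 i2 : ℤ, 1 - (n : ℤ) ≤ i1 → i1 ≤ 1 →
      1 - (n : ℤ) ≤ i2 → i2 ≤ 1 →
      subwordZ y i1 n = subwordZ y i2 n → i1 = i2 := by
  intro n
  induction n with
  | zero => omega
  | succ m ih =>
    intro _ i1 i2 hb1 hb2 hb3 hb4 heq
    by_cases hm : m = 0
    · subst hm
      by_contra hne
      have hp := subwordZ_eq_iff.mp heq 0 (by omega)
      have hcases : (i1 = 0 ∧ i2 = 1) ∨ (i1 = 1 ∧ i2 = 0) := by omega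
      rcases hcases with ⟨e1, e2⟩ | ⟨e1, e2⟩
      · rw [show i1 + ((0 : ℕ) : ℤ) = 0 by omega,
          show i2 + ((0 : ℕ) : ℤ) = 1 by omega] at hp
        exact h01 hp
      · rw [show i1 + ((0 : ℕ) : ℤ) = 1 by omega,
          show i2 + ((0 : ℕ) : ℤ) = 0 by omega] at hp
        exact h01 hp.symm
    · have hm1 : 1 ≤ m := by omega
      have core : ∀ a b : ℤ, 1 - ((m + 1 : ℕ) : ℤ) ≤ a → b ≤ 1 → a < b →
          subwordZ y a (m + 1) = subwordZ y b (m + 1) → False := by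
        intro a b ha hb hab he
        have hpt := subwordZ_eq_iff.mp he
        by_cases hia : 1 - (m : ℤ) ≤ a
        · -- use prefixes
          have hpre : subwordZ y a m = subwordZ y b m := by
            rw [subwordZ_eq_iff]
            intro s hs
            exact hpt s (by omega)
          have := ih hm1 a b hia (by omega) (by omega) (by omega) hpre
          omega
        · have hae : a = -(m : ℤ) := by push_cast at ha ⊢; omega
          by_cases hib : b ≤ 0
          · -- use suffixes
            have hsuf : subwordZ y (a + 1) m = subwordZ y (b + 1) m := by
              rw [subwordZ_eq_iff]
              intro s hs
              have h2 := hpt (s + 1) (by omega)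
              rwa [show a + ((s + 1 : ℕ) : ℤ) = a + 1 + s by push_cast; ring,
                show b + ((s + 1 : ℕ) : ℤ) = b + 1 + s by push_cast; ring] at h2
            have := ih hm1 (a + 1) (b + 1) (by omega) (by omega) (by omega)
              (by omega) hsuf
            omega
          · have hbe : b = 1 := by omega
            refine crux hap hc hRS hLS m (fun t ht1 ht2 => ?_)
            have hs : ((t + m).toNat : ℤ) = t + m := by omega
            have h2 := hpt (t + m).toNat (by omega)
            rwa [show a + (((t + m).toNat : ℕ) : ℤ) = t by omega,
              show b + (((t + m).toNat : ℕ) : ℤ) = t + m + 1 by omega] at h2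
      rcases lt_trichotomy i1 i2 with hlt | heq' | hlt
      · exact absurd (core i1 i2 hb1 hb4 hlt heq) id
      · exact heq'
      · exact absurd (core i2 i1 hb3 hb2 hlt heq.symm) id

lemma attractor_of_props {y : ℤ → Fin 2} (hap : AperiodicZ y)
    (hc : ∀ m : ℕ, complexityZ y m = m + 1)
    (hRS : ∀ m : ℕ, RightSpecialZ y (subwordZ y (-(m : ℤ)) m))
    (hLS : ∀ m : ℕ, LeftSpecialZ y (subwordZ y 2 m))
    (h01 : y 0 ≠ y 1) :
    IsAttractorZ y {0, 1} := by
  intro w hw hf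
  set n := w.length with hn
  have hn1 : 1 ≤ n := by
    rw [hn]
    exact List.length_pos_iff.mpr hw
  set F := (facSet_finite y n).toFinset with hF
  set I := Finset.Icc (1 - (n : ℤ)) 1 with hI
  have hIcard : I.card = n + 1 := by
    rw [hI, Int.card_Icc]
    omega
  have hFcard : F.card = n + 1 := by
    rw [hF, ← Set.ncard_eq_toFinset_card _ (facSet_finite y n),
      ← complexityZ_eq_ncard, hc n]
  have himg : I.image (fun i => subwordZ y i n) = F := by
    apply Finset.eq_of_subset_of_card_le
    · intro v hv
      obtain ⟨i, -, rfl⟩ := Finset.mem_image.mp hv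
      rw [hF, Set.Finite.mem_toFinset]
      exact subwordZ_mem_facSet y i n
    · rw [hFcard, ← hIcard]
      apply le_of_eq
      symm
      apply Finset.card_image_of_injOn
      intro i1 h1 i2 h2 he
      rw [hI, Finset.coe_Icc, Set.mem_Icc] at h1 h2
      exact windows_inj hap hc hRS hLS h01 n hn1 i1 i2 h1.1 h1.2 h2.1 h2.2 he
  have hwF : w ∈ F := by
    rw [hF, Set.Finite.mem_toFinset]
    exact ⟨hn.symm, hf⟩
  rw [← himg] at hwF
  obtain ⟨i, hiI, hiw⟩ := Finset.mem_image.mp hwF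
  rw [hI, Finset.mem_Icc] at hiI
  refine ⟨i, ?_, ?_⟩
  · rw [occursAt, ← hn]
    exact hiw
  · obtain ⟨hi1, hi2⟩ := hiI
    by_cases hile : i ≤ 0
    · exact ⟨0, Set.mem_insert _ _, hile, by omega⟩
    · exact ⟨1, Set.mem_insert_of_mem _ rfl, by omega, by omega⟩

lemma wordSpan_eq_one_of_char {y : ℤ → Fin 2} (h : CharacteristicSturmian y) :
    wordSpan y = 1 := by
  obtain ⟨⟨hap, hc⟩, hRS, hLS, h01⟩ := char_props h
  have hA := attractor_of_props hap hc hRS hLS h01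
  have hA' : IsAttractorZ y {(0 : ℤ), 0 + 1} := by
    rwa [show ((0 : ℤ) + 1) = 1 by norm_num]
  exact wordSpan_eq_one_of_pair hap hA'

end SpanOne
namespace SpanOne

lemma subwordZ_zero (x : ℤ → Fin 2) (i : ℤ) : subwordZ x i 0 = [] := by
  rw [subwordZ_def]
  simp

lemma occ_window {y : ℤ → Fin 2} (hA : IsAttractorZ y {0, 1}) {w : List (Fin 2)}
    (hw : w ≠ []) (hf : IsFactorZ y w) :
    ∃ i : ℤ, 1 - (w.length : ℤ) ≤ i ∧ i ≤ 1 ∧ subwordZ y i w.length = w := by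
  obtain ⟨i, hocc, p, hp, h1, h2⟩ := hA w hw hf
  simp only [Set.mem_insert_iff, Set.mem_singleton_iff] at hp
  have hlen : 1 ≤ w.length := List.length_pos_iff.mpr hw
  have hlenZ : 1 ≤ (w.length : ℤ) := by exact_mod_cast hlen
  rcases hp with rfl | rfl
  · exact ⟨i, by omega, by omega, hocc⟩
  · exact ⟨i, by omega, by omega, hocc⟩

lemma complexity_of_attr {y : ℤ → Fin 2} (hap : AperiodicZ y)
    (hA : IsAttractorZ y {0, 1}) : ∀ n : ℕ, complexityZ y n = n + 1 := by
  intro n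
  rcases Nat.eq_zero_or_pos n with rfl | hn
  · exact complexityZ_zero y
  have hge := complexity_ge_of_aperiodic hap n
  have hsub : facSet y n ⊆ (fun i => subwordZ y i n) '' (Set.Icc (1 - (n : ℤ)) 1) := by
    rintro w ⟨hl, hf⟩
    have hw : w ≠ [] := by
      intro h
      rw [h] at hl
      simp at hl
      omega
    obtain ⟨i, h1, h2, h3⟩ := occ_window hA hw hf
    exact ⟨i, by rw [Set.mem_Icc, hl] at *; exact ⟨h1, h2⟩, by rw [← hl]; exact h3⟩
  have hle : complexityZ y n ≤ n + 1 := by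
    rw [complexityZ_eq_ncard]
    calc (facSet y n).ncard
        ≤ ((fun i => subwordZ y i n) '' (Set.Icc (1 - (n : ℤ)) 1)).ncard :=
          Set.ncard_le_ncard hsub ((Set.finite_Icc _ _).image _)
      _ ≤ (Set.Icc (1 - (n : ℤ)) 1).ncard := Set.ncard_image_le (Set.finite_Icc _ _)
      _ = n + 1 := by
          rw [← Finset.coe_Icc, Set.ncard_coe_finset, Int.card_Icc]
          omega
  omega

lemma windows_inj_of_attr {y : ℤ → Fin 2} (hap : AperiodicZ y)
    (hA : IsAttractorZ y {0, 1}) {n : ℕ} (hn : 1 ≤ n) :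
    ∀ i1 i2 : ℤ, 1 - (n : ℤ) ≤ i1 → i1 ≤ 1 → 1 - (n : ℤ) ≤ i2 → i2 ≤ 1 →
      subwordZ y i1 n = subwordZ y i2 n → i1 = i2 := by
  have hc := complexity_of_attr hap hA
  set F := (facSet_finite y n).toFinset with hF
  set I := Finset.Icc (1 - (n : ℤ)) 1 with hI
  have hIcard : I.card = n + 1 := by
    rw [hI, Int.card_Icc]
    omega
  have hFcard : F.card = n + 1 := by
    rw [hF, ← Set.ncard_eq_toFinset_card _ (facSet_finite y n),
      ← complexityZ_eq_ncard, hc n]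
  have himg : I.image (fun i => subwordZ y i n) = F := by
    apply Finset.Subset.antisymm
    · intro v hv
      obtain ⟨i, -, rfl⟩ := Finset.mem_image.mp hv
      rw [hF, Set.Finite.mem_toFinset]
      exact subwordZ_mem_facSet y i n
    · intro v hv
      rw [hF, Set.Finite.mem_toFinset] at hv
      obtain ⟨hl, hf⟩ := hv
      have hvne : v ≠ [] := by
        intro h
        rw [h] at hl
        simp at hl
        omega
      obtain ⟨i, h1, h2, h3⟩ := occ_window hA hvne hf
      rw [hl] at h1 h3
      exact Finset.mem_image.mpr ⟨i, Finset.mem_Icc.mpr ⟨h1, h2⟩, h3⟩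
  have hinj : Set.InjOn (fun i => subwordZ y i n) ↑I := by
    apply Finset.card_image_iff.mp
    rw [himg, hFcard, hIcard]
  intro i1 i2 h1 h2 h3 h4 heq
  exact hinj (by rw [hI, Finset.coe_Icc, Set.mem_Icc]; exact ⟨h1, h2⟩)
    (by rw [hI, Finset.coe_Icc, Set.mem_Icc]; exact ⟨h3, h4⟩) heq

lemma ne01_of_attr {y : ℤ → Fin 2} (hap : AperiodicZ y)
    (hA : IsAttractorZ y {0, 1}) : y 0 ≠ y 1 := by
  intro h
  have heq : subwordZ y 0 1 = subwordZ y 1 1 := by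
    rw [subwordZ_one, subwordZ_one, h]
  have := windows_inj_of_attr hap hA le_rfl 0 1 (by norm_num) (by norm_num)
    (by norm_num) (by norm_num) heq
  norm_num at this

lemma rs_of_attr {y : ℤ → Fin 2} (hap : AperiodicZ y)
    (hA : IsAttractorZ y {0, 1}) (m : ℕ) :
    RightSpecialZ y (subwordZ y (-(m : ℤ)) m) := by
  have h01 := ne01_of_attr hap hA
  rcases Nat.eq_zero_or_pos m with rfl | hm
  · rw [subwordZ_zero]
    refine ⟨y 0, y 1, h01, ⟨0, ?_⟩, ⟨1, ?_⟩⟩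
    · rw [occursAt]
      simp [subwordZ_one]
    · rw [occursAt]
      simp [subwordZ_one]
  · have hu : subwordZ y (-(m : ℤ)) m ≠ [] := by
      intro h
      have := length_subwordZ y (-(m : ℤ)) m
      rw [h] at this
      simp at this
      omega
    obtain ⟨i0, hb1, hb2, hocc⟩ := occ_window hA hu (isFactor_subwordZ _ _ _)
    rw [length_subwordZ] at hb1 hocc
    have hf1 : subwordZ y (-(m : ℤ)) m ++ [y 0] = subwordZ y (-(m : ℤ)) (m + 1) := by
      rw [subwordZ_snoc, show -(m : ℤ) + m = 0 by ring]
    have hf2 : subwordZ y (-(m : ℤ)) m ++ [y (i0 + m)] = subwordZ y i0 (m + 1) := by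
      rw [subwordZ_snoc, hocc]
    refine ⟨y 0, y (i0 + m), ?_, ?_, ?_⟩
    · intro h
      have heq : subwordZ y (-(m : ℤ)) (m + 1) = subwordZ y i0 (m + 1) := by
        rw [← hf1, ← hf2, h]
      have := windows_inj_of_attr hap hA (by omega : 1 ≤ m + 1) (-(m : ℤ)) i0
        (by push_cast; omega) (by omega) (by push_cast; omega) hb2 heq
      omega
    · rw [hf1]
      exact isFactor_subwordZ _ _ _
    · rw [hf2]
      exact isFactor_subwordZ _ _ _

lemma ls_of_attr {y : ℤ → Fin 2} (hap : AperiodicZ y)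
    (hA : IsAttractorZ y {0, 1}) (m : ℕ) :
    LeftSpecialZ y (subwordZ y 2 m) := by
  have h01 := ne01_of_attr hap hA
  rcases Nat.eq_zero_or_pos m with rfl | hm
  · rw [subwordZ_zero]
    refine ⟨y 0, y 1, h01, ⟨0, ?_⟩, ⟨1, ?_⟩⟩
    · rw [occursAt]
      simp [subwordZ_one]
    · rw [occursAt]
      simp [subwordZ_one]
  · have hu : subwordZ y 2 m ≠ [] := by
      intro h
      have := length_subwordZ y 2 m
      rw [h] at this
      simp at this
      omega
    obtain ⟨j0, hb1, hb2, hocc⟩ := occ_window hA hu (isFactor_subwordZ _ _ _)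
    rw [length_subwordZ] at hb1 hocc
    have hf1 : y 1 :: subwordZ y 2 m = subwordZ y 1 (m + 1) := by
      rw [subwordZ_cons' y m (show (2 : ℤ) = 1 + 1 by norm_num)]
    have hf2 : y (j0 - 1) :: subwordZ y 2 m = subwordZ y (j0 - 1) (m + 1) := by
      rw [subwordZ_cons' y m (show j0 = (j0 - 1) + 1 by ring), hocc]
    refine ⟨y 1, y (j0 - 1), ?_, ?_, ?_⟩
    · intro h
      have heq : subwordZ y 1 (m + 1) = subwordZ y (j0 - 1) (m + 1) := by
        rw [← hf1, ← hf2, h]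
      have := windows_inj_of_attr hap hA (by omega : 1 ≤ m + 1) 1 (j0 - 1)
        (by push_cast; omega) (by omega) (by push_cast; omega) (by omega) heq
      omega
    · rw [hf1]
      exact isFactor_subwordZ _ _ _
    · rw [hf2]
      exact isFactor_subwordZ _ _ _

lemma fin_two_ne {a : Fin 2} (h : a ≠ 0) : a = 1 := by
  omega

lemma char_of_attractor {y : ℤ → Fin 2} (hap : AperiodicZ y)
    (hA : IsAttractorZ y {0, 1}) : CharacteristicSturmian y := by
  have hc := complexity_of_attr hap hA
  have h01 := ne01_of_attr hap hA
  have hRS := rs_of_attr hap hA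
  have hLS := ls_of_attr hap hA
  by_cases h0 : y 0 = 0
  · have h1 : y 1 = 1 := by
      apply fin_two_ne
      rw [← h0]
      exact fun h => h01 h.symm
    left
    refine ⟨⟨hap, hc⟩, fun n => ⟨subwordZ y (-(n : ℤ)) n, subwordZ y 2 n,
      length_subwordZ _ _ _, hRS n, length_subwordZ _ _ _, hLS n, ?_⟩⟩
    rw [subwordZ_center, h0, h1]
  · have h0' : y 0 = 1 := fin_two_ne h0
    have h1 : y 1 = 0 := by
      by_contra h
      exact h01 (by rw [h0', fin_two_ne h])
    right
    refine ⟨⟨hap, hc⟩, fun n => ⟨subwordZ y (-(n : ℤ)) n, subwordZ y 2 n,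
      length_subwordZ _ _ _, hRS n, length_subwordZ _ _ _, hLS n, ?_⟩⟩
    rw [subwordZ_center, h0', h1]

end SpanOne


/-- An aperiodic bi-infinite word over `{0,1}` has span `1` iff some shift
of it is a characteristic Sturmian word. -/
theorem span_one_iff_characteristic (x : ℤ → Fin 2) (hx : AperiodicZ x) :
    wordSpan x = 1 ↔ ∃ k : ℤ, CharacteristicSturmian (shiftZ k x) := by
  constructor
  · intro h1
    obtain ⟨p, hp⟩ := SpanOne.exists_attractor_pair h1
    refine ⟨p, ?_⟩
    have hA := SpanOne.isAttractorZ_shiftZ (k := p) hp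
    have hset : {q : ℤ | q + p ∈ ({p, p + 1} : Set ℤ)} = {0, 1} := by
      ext q
      simp only [Set.mem_setOf_eq, Set.mem_insert_iff, Set.mem_singleton_iff]
      omega
    rw [hset] at hA
    exact SpanOne.char_of_attractor (SpanOne.aperiodicZ_shiftZ.mpr hx) hA
  · rintro ⟨k, hk⟩
    have h1 := SpanOne.wordSpan_eq_one_of_char hk
    rwa [SpanOne.wordSpan_shiftZ] at h1
end
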